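/- arXiv:1312.0471 — 2 statements merged into one kernel-verified Lean document; each statement's English description precedes it below -/
import Mathlib

section
/- Let $\varphi$ be an automorphism of $\mathbb{B}_N$ whose only fixed point in $\overline{\mathbb{B}_N}$ is $e_1 \in S_N$. Then $\lim_{z\to e_1,\, z\in\mathbb{B}_N} \frac{1-\|\varphi(z)\|^2}{1-\|z\|^2} = 1$. -/
open Metric Filter

noncomputable section
namespace Stmt12

variable {N : ℕ}

local notation "E" => EuclideanSpace ℂ (Fin (N+1))
local notation "⟪" x ", " y "⟫" => (inner ℂ x y : ℂ)

/-- Möbius automorphism of the unit ball sending `a` to `0`. -/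
def mob (a z : E) : E :=
  (1 - ⟪a, z⟫)⁻¹ •
    ((1 - (1 - (Real.sqrt (1 - ‖a‖^2) : ℂ)) * (⟪a, z⟫ / ((‖a‖^2 : ℝ) : ℂ))) • a
      - (Real.sqrt (1 - ‖a‖^2) : ℂ) • z)

lemma inner_lt_one {a z : E} (ha : ‖a‖ < 1) (hz : ‖z‖ < 1) : ‖⟪a, z⟫‖ < 1 := by
  calc ‖⟪a, z⟫‖ ≤ ‖a‖ * ‖z‖ := norm_inner_le_norm a z
    _ < 1 := by nlinarith [norm_nonneg a, norm_nonneg z]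

lemma one_sub_inner_ne_zero {a z : E} (ha : ‖a‖ < 1) (hz : ‖z‖ < 1) :
    (1 : ℂ) - ⟪a, z⟫ ≠ 0 := by
  intro h
  have h1 : (1 : ℂ) = ⟪a, z⟫ := by linear_combination h
  have h2 := inner_lt_one ha hz
  rw [← h1] at h2
  simp at h2

lemma mob_zero_left {z : E} : mob 0 z = -z := by
  simp [mob, Real.sqrt_one]


lemma norm_mob_identity {a z : E} (ha : ‖a‖ < 1) (hz : ‖z‖ < 1) :
    (1 - ‖mob a z‖^2) * ‖(1 : ℂ) - ⟪a, z⟫‖^2 = (1 - ‖a‖^2) * (1 - ‖z‖^2) := by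
  rcases eq_or_ne a 0 with rfl | ha0
  · simp [mob_zero_left]
  have hden : (1 : ℂ) - ⟪a, z⟫ ≠ 0 := one_sub_inner_ne_zero ha hz
  simp only [mob]
  set α : ℂ := ⟪a, z⟫ with hα
  set t : ℝ := ‖a‖^2 with ht
  set s : ℝ := Real.sqrt (1 - t) with hs
  have ht0 : 0 < t := by rw [ht]; exact pow_pos (norm_pos_iff.2 ha0) 2
  have ht1 : t < 1 := by nlinarith [norm_nonneg a]
  have hs2 : (s:ℝ)^2 = 1 - t := Real.sq_sqrt (by linarith)
  set c : ℂ := 1 - (1 - (s : ℂ)) * (α / (t : ℂ)) with hc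
  set num : E := c • a - (s : ℂ) • z with hnum
  have htne : (t : ℂ) ≠ 0 := by exact_mod_cast ht0.ne'
  have hinner_aa : ⟪a, a⟫ = (t : ℂ) := by
    rw [inner_self_eq_norm_sq_to_K, ht]; norm_cast
  have hinner_zz : ⟪z, z⟫ = ((‖z‖^2 : ℝ) : ℂ) := by
    rw [inner_self_eq_norm_sq_to_K]; norm_cast
  have hinner_za : ⟪z, a⟫ = (starRingEnd ℂ) α := by rw [hα, inner_conj_symm]
  have hnum_inner : ⟪num, num⟫ =
      (starRingEnd ℂ) c * c * (t : ℂ) - (starRingEnd ℂ) c * (s : ℂ) * α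
        - c * (s : ℂ) * (starRingEnd ℂ) α + (s : ℂ)^2 * ((‖z‖^2 : ℝ) : ℂ) := by
    rw [hnum]
    simp only [inner_sub_left, inner_sub_right, inner_smul_left, inner_smul_right,
      hinner_aa, hinner_zz, hinner_za, ← hα, Complex.conj_ofReal]
    ring
  have hconj_c : (starRingEnd ℂ) c = 1 - (1 - (s:ℂ)) * ((starRingEnd ℂ) α / (t : ℂ)) := by
    rw [hc]
    simp [map_sub, map_mul, map_div₀, Complex.conj_ofReal]
  have hs2' : ((s:ℂ))^2 = 1 - (t:ℂ) := by
    rw [show ((s:ℂ))^2 = ((s^2 : ℝ) : ℂ) by push_cast; ring, hs2]; push_cast; ring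
  -- the complex identity
  have hkey : ⟪num, num⟫ = (1 - α) * (1 - (starRingEnd ℂ) α)
      - ((1 : ℂ) - (t:ℂ)) * (1 - ((‖z‖^2 : ℝ) : ℂ)) := by
    rw [hnum_inner, hconj_c, hc]
    field_simp
    push_cast
    linear_combination ((t:ℂ) * (‖z‖:ℂ)^2 - ((starRingEnd ℂ) α) * α) * hs2'
  -- pass to real norms
  have hnorm_num : ‖num‖^2 = ‖(1:ℂ) - α‖^2 - (1 - t) * (1 - ‖z‖^2) := by
    have h1 : ((‖num‖^2 : ℝ) : ℂ) = ⟪num, num⟫ := by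
      rw [inner_self_eq_norm_sq_to_K]; norm_cast
    have h2 : ((‖(1:ℂ) - α‖ : ℝ) : ℂ)^2 = (1 - α) * (1 - (starRingEnd ℂ) α) := by
      have hcm : (starRingEnd ℂ) ((1:ℂ) - α) = 1 - (starRingEnd ℂ) α := by
        simp [map_sub]
      rw [← hcm, Complex.mul_conj]
      norm_cast
      rw [Complex.normSq_eq_norm_sq]
    have h3 : ((‖num‖^2 : ℝ) : ℂ)
        = ((‖(1:ℂ) - α‖^2 - (1 - t) * (1 - ‖z‖^2) : ℝ) : ℂ) := by
      rw [h1, hkey, ← h2]; push_cast; ring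
    exact_mod_cast h3
  have hne : ‖(1:ℂ) - α‖ ≠ 0 := norm_ne_zero_iff.2 hden
  have hmobnorm : ‖(1 - α)⁻¹ • num‖^2 * ‖(1:ℂ) - α‖^2 = ‖num‖^2 := by
    rw [norm_smul, norm_inv, mul_pow, inv_pow]
    rw [mul_comm ((‖(1:ℂ) - α‖ ^ 2)⁻¹) (‖num‖ ^ 2)]
    exact inv_mul_cancel_right₀ (pow_ne_zero _ hne) _
  calc (1 - ‖(1 - α)⁻¹ • num‖^2) * ‖(1:ℂ) - α‖^2
      = ‖(1:ℂ) - α‖^2 - ‖(1 - α)⁻¹ • num‖^2 * ‖(1:ℂ) - α‖^2 := by ring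
    _ = ‖(1:ℂ) - α‖^2 - ‖num‖^2 := by rw [hmobnorm]
    _ = (1 - t) * (1 - ‖z‖^2) := by rw [hnorm_num]; ring


lemma mob_zero_right {a : E} : mob a 0 = a := by
  simp [mob]

lemma mob_self {a : E} (ha : ‖a‖ < 1) : mob a a = 0 := by
  rcases eq_or_ne a 0 with rfl | ha0
  · simp [mob_zero_left]
  have hinner_aa : ⟪a, a⟫ = ((‖a‖^2 : ℝ) : ℂ) := by
    rw [inner_self_eq_norm_sq_to_K]; norm_cast
  have htne : ((‖a‖^2 : ℝ) : ℂ) ≠ 0 := by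
    simpa using pow_ne_zero 2 (norm_ne_zero_iff.2 ha0)
  rw [mob, hinner_aa]
  rw [div_self htne]
  rw [show (1 - (1 - (Real.sqrt (1 - ‖a‖^2) : ℂ)) * 1) = (Real.sqrt (1 - ‖a‖^2) : ℂ) by ring]
  simp [sub_self]

lemma mob_mem_ball {a z : E} (ha : ‖a‖ < 1) (hz : ‖z‖ < 1) : ‖mob a z‖ < 1 := by
  have h := norm_mob_identity ha hz
  have h2 : 0 < ‖(1 : ℂ) - ⟪a, z⟫‖^2 :=
    pow_pos (norm_pos_iff.2 (one_sub_inner_ne_zero ha hz)) 2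
  have h3 : 0 < (1-‖a‖^2) * (1-‖z‖^2) :=
    mul_pos (by nlinarith [norm_nonneg a]) (by nlinarith [norm_nonneg z])
  nlinarith [norm_nonneg (mob a z), sq_nonneg (1 - ‖mob a z‖)]

lemma inner_mob {a z : E} (ha : ‖a‖ < 1) (hz : ‖z‖ < 1) :
    ⟪a, mob a z⟫ = (((‖a‖^2 : ℝ) : ℂ) - ⟪a, z⟫) / (1 - ⟪a, z⟫) := by
  have hinner_aa : ⟪a, a⟫ = ((‖a‖^2 : ℝ) : ℂ) := by
    rw [inner_self_eq_norm_sq_to_K]; norm_cast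
  rcases eq_or_ne a 0 with rfl | ha0
  · simp [mob_zero_left, inner_zero_left]
  have htne : ((‖a‖^2 : ℝ) : ℂ) ≠ 0 := by
    simpa using pow_ne_zero 2 (norm_ne_zero_iff.2 ha0)
  set α : ℂ := ⟪a, z⟫ with hα
  set T : ℂ := ((‖a‖^2 : ℝ) : ℂ) with hT
  rw [mob, inner_smul_right, inner_sub_right, inner_smul_right, inner_smul_right, hinner_aa]
  rw [← hα, ← hT, show (T - α)/(1-α) = (1-α)⁻¹ * (T-α) from div_eq_inv_mul _ _]
  have hX : ∀ x y : ℂ, x = y → (1-α)⁻¹ * x = (1-α)⁻¹ * y := fun x y h => by rw [h]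
  apply hX
  field_simp
  ring

lemma mob_mob {a z : E} (ha : ‖a‖ < 1) (hz : ‖z‖ < 1) : mob a (mob a z) = z := by
  rcases eq_or_ne a 0 with rfl | ha0
  · simp [mob_zero_left]
  set α : ℂ := ⟪a, z⟫ with hα
  have hden : (1 : ℂ) - α ≠ 0 := one_sub_inner_ne_zero ha hz
  set t : ℝ := ‖a‖^2 with ht
  set s : ℝ := Real.sqrt (1 - t) with hs
  have ht0 : 0 < t := by rw [ht]; exact pow_pos (norm_pos_iff.2 ha0) 2
  have ht1 : t < 1 := by nlinarith [norm_nonneg a]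
  have hs2 : (s:ℝ)^2 = 1 - t := Real.sq_sqrt (by linarith)
  have hs0 : (0:ℝ) < s := Real.sqrt_pos.2 (by linarith)
  have htne : (t : ℂ) ≠ 0 := by exact_mod_cast ht0.ne'
  have hsne : (s : ℂ) ≠ 0 := by exact_mod_cast hs0.ne'
  have hs2' : ((s:ℂ))^2 = 1 - (t:ℂ) := by
    rw [show ((s:ℂ))^2 = ((s^2 : ℝ) : ℂ) by push_cast; ring, hs2]; push_cast; ring
  have hβ : ⟪a, mob a z⟫ = ((t:ℂ) - α) / (1 - α) := inner_mob ha hz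
  have hdenβ : (1:ℂ) - ⟪a, mob a z⟫ = ((s:ℂ))^2 / (1 - α) := by
    rw [hβ, hs2']
    field_simp
    ring
  have hmobz : mob a z = (1 - α)⁻¹ • ((1 - (1 - (s : ℂ)) * (α / (t : ℂ))) • a - (s : ℂ) • z) := rfl
  rw [mob]
  rw [← ht, ← hs, hdenβ, hβ, hmobz]
  match_scalars
  · field_simp
    linear_combination (-α) * hs2'
  · field_simp


lemma differentiableOn_mob {a : E} (ha : ‖a‖ < 1) :
    DifferentiableOn ℂ (mob a) (ball 0 1) := by
  have hinner : Differentiable ℂ (fun z : E => (⟪a, z⟫ : ℂ)) :=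
    (innerSL ℂ a).differentiable
  have hmm : mob a = fun z =>
      (1 - ⟪a, z⟫)⁻¹ •
        ((1 - (1 - (Real.sqrt (1 - ‖a‖^2) : ℂ)) * (⟪a, z⟫ * ((‖a‖^2 : ℝ) : ℂ)⁻¹)) • a
          - (Real.sqrt (1 - ‖a‖^2) : ℂ) • z) := by
    funext z; rw [mob, div_eq_mul_inv]
  rw [hmm]
  apply DifferentiableOn.fun_smul
  · apply DifferentiableOn.inv
    · exact (differentiable_const (1:ℂ)).differentiableOn.sub hinner.differentiableOn
    · intro z hz
      exact one_sub_inner_ne_zero ha (by simpa [mem_ball_zero_iff] using hz)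
  · apply DifferentiableOn.sub
    · apply DifferentiableOn.smul_const
      apply DifferentiableOn.sub (differentiableOn_const _)
      apply DifferentiableOn.mul (differentiableOn_const _)
      exact (hinner.mul_const _).differentiableOn
    · exact ((differentiable_id (𝕜 := ℂ)).const_smul
        ((Real.sqrt (1 - ‖a‖^2) : ℂ))).differentiableOn

/-- Vector-valued Schwarz lemma on the unit ball. -/
lemma schwarz_ball {g : E → E} (hg : DifferentiableOn ℂ g (ball 0 1))
    (hm : Set.MapsTo g (ball 0 1) (ball 0 1)) (h0 : g 0 = 0)
    {z : E} (hz : ‖z‖ < 1) : ‖g z‖ ≤ ‖z‖ := by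
  rcases eq_or_ne z 0 with rfl | hz0
  · simp [h0]
  have hzpos : (0:ℝ) < ‖z‖ := norm_pos_iff.2 hz0
  set f : ℂ → E := fun ζ => g (ζ • z) with hf
  have hmaps0 : ∀ ζ : ℂ, ζ ∈ ball (0:ℂ) ‖z‖⁻¹ → ζ • z ∈ ball (0:E) 1 := by
    intro ζ hζ
    rw [mem_ball_zero_iff] at hζ ⊢
    rw [norm_smul]
    calc ‖ζ‖ * ‖z‖ < ‖z‖⁻¹ * ‖z‖ := by
          apply mul_lt_mul_of_pos_right hζ hzpos
      _ = 1 := inv_mul_cancel₀ hzpos.ne'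
  have hd : DifferentiableOn ℂ f (ball (0:ℂ) ‖z‖⁻¹) := by
    apply hg.comp
    · exact (differentiable_id.smul_const z).differentiableOn
    · exact hmaps0
  have hmaps : Set.MapsTo f (ball (0:ℂ) ‖z‖⁻¹) (ball (f 0) 1) := by
    intro ζ hζ
    have : f 0 = 0 := by simp [hf, h0]
    rw [this]
    exact hm (hmaps0 ζ hζ)
  have h1mem : (1:ℂ) ∈ ball (0:ℂ) ‖z‖⁻¹ := by
    rw [mem_ball_zero_iff]
    simpa using (one_lt_inv₀ hzpos).2 hz
  have := Complex.dist_le_div_mul_dist_of_mapsTo_ball hd (hmaps.mono_right ball_subset_closedBall) h1mem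
  simp only [hf] at this
  rw [one_smul, zero_smul, h0] at this
  simpa [dist_zero_right, one_div, inv_inv] using this


/-- Schwarz–Pick inequality on the ball. -/
lemma schwarz_pick {f : E → E} (hf : DifferentiableOn ℂ f (ball 0 1))
    (hm : Set.MapsTo f (ball 0 1) (ball 0 1)) {z w : E} (hz : ‖z‖ < 1) (hw : ‖w‖ < 1) :
    (1 - ‖w‖^2) * (1 - ‖z‖^2) * ‖(1:ℂ) - ⟪f w, f z⟫‖^2
      ≤ (1 - ‖f w‖^2) * (1 - ‖f z‖^2) * ‖(1:ℂ) - ⟪w, z⟫‖^2 := by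
  have hfw : ‖f w‖ < 1 := by
    simpa [mem_ball_zero_iff] using hm (by simpa [mem_ball_zero_iff] using hw)
  have hfz : ‖f z‖ < 1 := by
    simpa [mem_ball_zero_iff] using hm (by simpa [mem_ball_zero_iff] using hz)
  -- the composed map
  set g : E → E := fun u => mob (f w) (f (mob w u)) with hg
  have hmobw : Set.MapsTo (mob w) (ball (0:E) 1) (ball (0:E) 1) := by
    intro u hu
    rw [mem_ball_zero_iff] at hu ⊢
    exact mob_mem_ball hw hu
  have hfm : Set.MapsTo (fun u => f (mob w u)) (ball (0:E) 1) (ball (0:E) 1) :=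
    fun u hu => hm (hmobw hu)
  have hgm : Set.MapsTo g (ball (0:E) 1) (ball (0:E) 1) := by
    intro u hu
    rw [mem_ball_zero_iff]
    exact mob_mem_ball hfw (by simpa [mem_ball_zero_iff] using hfm hu)
  have hgd : DifferentiableOn ℂ g (ball 0 1) := by
    apply (differentiableOn_mob hfw).comp
    · exact hf.comp (differentiableOn_mob hw) hmobw
    · exact hfm
  have hg0 : g 0 = 0 := by
    rw [hg]
    simp only [mob_zero_right]
    exact mob_self hfw
  have hmwz : ‖mob w z‖ < 1 := mob_mem_ball hw hz
  have hP : ‖mob (f w) (f z)‖ ≤ ‖mob w z‖ := by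
    have := schwarz_ball hgd hgm hg0 hmwz
    rw [hg] at this
    simpa [mob_mob hw hz] using this
  have id1 := norm_mob_identity hw hz
  have id2 := norm_mob_identity hfw hfz
  have hB : ‖mob (f w) (f z)‖^2 ≤ ‖mob w z‖^2 :=
    pow_le_pow_left₀ (norm_nonneg _) hP 2
  nlinarith [sq_nonneg ‖(1:ℂ) - ⟪w, z⟫‖, sq_nonneg ‖(1:ℂ) - ⟪f w, f z⟫‖,
    mul_nonneg (sq_nonneg ‖(1:ℂ) - ⟪w, z⟫‖) (sq_nonneg ‖(1:ℂ) - ⟪f w, f z⟫‖),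
    mul_nonneg (mul_nonneg (sq_nonneg ‖(1:ℂ) - ⟪w, z⟫‖) (sq_nonneg ‖(1:ℂ) - ⟪f w, f z⟫‖))
      (sub_nonneg.2 hB)]


lemma growth_contra {x : ℕ → ℝ} (hx0 : ∀ n, 0 < x n) (hx1 : ∀ n, x n ≤ 1)
    {q : ℝ} (hq : 1 < q) (h : ∀ n, q * x n ≤ x (n+1)) : False := by
  have hq0 : (0:ℝ) < q := lt_trans one_pos hq
  have key : ∀ k, q^k * x 0 ≤ x k := by
    intro k; induction k with
    | zero => simp
    | succ k ih =>
      calc q^(k+1) * x 0 = q * (q^k * x 0) := by ring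
        _ ≤ q * x k := by nlinarith [pow_pos hq0 k]
        _ ≤ x (k+1) := h k
  obtain ⟨k, hk⟩ := pow_unbounded_of_one_lt ((1:ℝ)/(x 0)) hq
  have h1 : (1:ℝ)/(x 0) * x 0 < q^k * x 0 := by
    apply mul_lt_mul_of_pos_right hk (hx0 0)
  rw [one_div, inv_mul_cancel₀ (hx0 0).ne'] at h1
  nlinarith [key k, hx1 k]

lemma dist_sq_le {u v : E} (hu : ‖u‖ ≤ 1) (hv : ‖v‖ ≤ 1) :
    dist u v ^ 2 ≤ 2 * ‖(1:ℂ) - ⟪u, v⟫‖ := by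
  rw [dist_eq_norm]
  have h := norm_sub_sq (𝕜 := ℂ) u v
  have hre : RCLike.re ((1:ℂ) - ⟪u,v⟫) ≤ ‖(1:ℂ) - ⟪u,v⟫‖ := RCLike.re_le_norm _
  have hre2 : RCLike.re ((1:ℂ) - (⟪u,v⟫ : ℂ)) = 1 - RCLike.re (⟪u,v⟫ : ℂ) := by
    simp [map_sub]
  nlinarith [norm_nonneg u, norm_nonneg v]


lemma norm_one_sub_inner_comm (x y : E) : ‖(1:ℂ) - ⟪x, y⟫‖ = ‖(1:ℂ) - ⟪y, x⟫‖ := by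
  have h : (starRingEnd ℂ) ((1:ℂ) - ⟪x, y⟫) = (1:ℂ) - ⟪y, x⟫ := by
    rw [map_sub, inner_conj_symm]
    simp
  rw [← h, RCLike.norm_conj]

/-- An orbit of almost-fixed points converging geometrically to the boundary converges
to the unique fixed point `e₁`. -/
lemma orbit_tendsto {φ : E → E} {e₁ : E}
    (hφc : ContinuousOn φ (closedBall 0 1))
    (honly : ∀ z ∈ closedBall (0:E) 1, φ z = z → z = e₁)
    {u : ℕ → E} (humem : ∀ n, ‖u n‖ < 1)
    (hIter : (∀ n, φ (u n) = u (n+1)) ∨ (∀ n, φ (u (n+1)) = u n))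
    {r : ℝ} (hr0 : 0 < r) (hr1 : r < 1)
    (hsmall : ∀ n, 1-‖u n‖^2 ≤ 4 * r^n)
    {D : ℝ} (hD : 0 < D)
    (hQorb : ∀ n, ‖(1:ℂ) - ⟪u n, u (n+1)⟫‖^2 * D = (1-‖u n‖^2)*(1-‖u (n+1)‖^2)) :
    Tendsto u atTop (nhds e₁) := by
  have hxpos : ∀ n, 0 < 1-‖u n‖^2 := fun n => by nlinarith [humem n, norm_nonneg (u n)]
  set ρ := Real.sqrt r with hρ
  have hρ0 : 0 ≤ ρ := Real.sqrt_nonneg r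
  have hρsq : ρ^2 = r := Real.sq_sqrt hr0.le
  have hρ1 : ρ < 1 := by nlinarith
  set C := Real.sqrt (8 / Real.sqrt D) with hC
  have hsD : 0 < Real.sqrt D := Real.sqrt_pos.2 hD
  have hC0 : 0 ≤ C := Real.sqrt_nonneg _
  have hCsq : C^2 = 8 / Real.sqrt D := Real.sq_sqrt (by positivity)
  have hdist : ∀ n, dist (u n) (u (n+1)) ≤ C * ρ^n := by
    intro n
    have hQn := hQorb n
    have h1 := hsmall n
    have h2 := hsmall (n+1)
    have h3 : (1:ℝ)-‖u (n+1)‖^2 ≤ 4*r^n := by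
      have : r^(n+1) ≤ r^n := by
        rw [pow_succ]
        nlinarith [pow_pos hr0 n]
      linarith
    have hXsq : ‖(1:ℂ) - ⟪u n, u (n+1)⟫‖^2 ≤ 16*(r^n)^2/D := by
      rw [le_div_iff₀ hD]
      calc ‖(1:ℂ) - ⟪u n, u (n+1)⟫‖^2 * D = (1-‖u n‖^2)*(1-‖u (n+1)‖^2) := hQn
        _ ≤ (4*r^n)*(4*r^n) := by nlinarith [hxpos n, hxpos (n+1)]
        _ = 16*(r^n)^2 := by ring
    have hX : ‖(1:ℂ) - ⟪u n, u (n+1)⟫‖ ≤ 4*r^n/Real.sqrt D := by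
      have hsq : (4*r^n/Real.sqrt D)^2 = 16*(r^n)^2/D := by
        rw [div_pow, Real.sq_sqrt hD.le]
        ring
      rw [← Real.sqrt_sq (norm_nonneg _), ← Real.sqrt_sq (by positivity : (0:ℝ) ≤ 4*r^n/Real.sqrt D)]
      apply Real.sqrt_le_sqrt
      rw [hsq]
      exact hXsq
    have hd2 : dist (u n) (u (n+1))^2 ≤ (C * ρ^n)^2 := by
      have h5 := dist_sq_le (humem n).le (humem (n+1)).le
      have h6 : (C*ρ^n)^2 = (8/Real.sqrt D) * r^n := by
        rw [mul_pow, hCsq, ← pow_mul, mul_comm n 2, pow_mul, hρsq]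
      rw [h6]
      calc dist (u n) (u (n+1))^2 ≤ 2 * ‖(1:ℂ) - ⟪u n, u (n+1)⟫‖ := h5
        _ ≤ 2 * (4*r^n/Real.sqrt D) := by linarith
        _ = (8/Real.sqrt D) * r^n := by ring
    rw [← Real.sqrt_sq dist_nonneg, ← Real.sqrt_sq (by positivity : (0:ℝ) ≤ C * ρ^n)]
    exact Real.sqrt_le_sqrt hd2
  have hcauchy : CauchySeq u := cauchySeq_of_le_geometric ρ C hρ1 hdist
  obtain ⟨ζ, hζ⟩ := cauchySeq_tendsto_of_complete hcauchy
  have hζc : ζ ∈ closedBall (0:E) 1 :=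
    isClosed_closedBall.mem_of_tendsto hζ
      (Filter.Eventually.of_forall fun n => ball_subset_closedBall
        (mem_ball_zero_iff.2 (humem n)))
  have hucb : Tendsto u atTop (nhdsWithin ζ (closedBall (0:E) 1)) :=
    tendsto_nhdsWithin_of_tendsto_nhds_of_eventually_within u hζ
      (Filter.Eventually.of_forall fun n => ball_subset_closedBall
        (mem_ball_zero_iff.2 (humem n)))
  have hφu : Tendsto (fun n => φ (u n)) atTop (nhds (φ ζ)) :=
    Filter.Tendsto.comp (hφc ζ hζc) hucb
  have hφζ : φ ζ = ζ := by
    rcases hIter with hI | hI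
    · refine tendsto_nhds_unique hφu ?_
      have he : (fun n => φ (u n)) = fun n => u (n+1) := funext hI
      rw [he]
      exact hζ.comp (tendsto_add_atTop_nat 1)
    · have h6 : Tendsto (fun n => φ (u (n+1))) atTop (nhds (φ ζ)) :=
        hφu.comp (tendsto_add_atTop_nat 1)
      have he : (fun n => φ (u (n+1))) = fun n => u n := funext hI
      rw [he] at h6
      exact tendsto_nhds_unique h6 hζ
  have := honly ζ hζc hφζ
  rwa [this] at hζ

end Stmt12

set_option maxHeartbeats 1000000 in
open Stmt12 in
/-- If `φ` is an automorphism of `𝔹_N` whose only fixed point in the closed ball is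
`e₁ = (1,0,…,0)`, then `(1-‖φ(z)‖²)/(1-‖z‖²) → 1` as `z → e₁` within the ball. -/
theorem stmt12 {N : ℕ}
    (φ φinv : EuclideanSpace ℂ (Fin (N + 1)) → EuclideanSpace ℂ (Fin (N + 1)))
    (e₁ : EuclideanSpace ℂ (Fin (N + 1))) (he₁ : e₁ = EuclideanSpace.single 0 1)
    (hφc : ContinuousOn φ (closedBall 0 1))
    (hφ : DifferentiableOn ℂ φ (ball 0 1))
    (hφinv : DifferentiableOn ℂ φinv (ball 0 1))
    (hφm : Set.MapsTo φ (ball 0 1) (ball 0 1))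
    (hφinvm : Set.MapsTo φinv (ball 0 1) (ball 0 1))
    (hleft : ∀ z ∈ ball (0 : EuclideanSpace ℂ (Fin (N + 1))) 1, φinv (φ z) = z)
    (hright : ∀ z ∈ ball (0 : EuclideanSpace ℂ (Fin (N + 1))) 1, φ (φinv z) = z)
    (hfix : φ e₁ = e₁)
    (honly : ∀ z ∈ closedBall (0 : EuclideanSpace ℂ (Fin (N + 1))) 1, φ z = z → z = e₁) :
    Tendsto (fun z : EuclideanSpace ℂ (Fin (N + 1)) => (1 - ‖φ z‖ ^ 2) / (1 - ‖z‖ ^ 2))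
      (nhdsWithin e₁ (ball 0 1)) (nhds 1) := by
  classical
  have h0m : (0 : EuclideanSpace ℂ (Fin (N+1))) ∈ ball (0 : EuclideanSpace ℂ (Fin (N+1))) 1 :=
    mem_ball_self one_pos
  set b := φ 0 with hbdef
  have hbn : ‖b‖ < 1 := mem_ball_zero_iff.1 (hφm h0m)
  have hbpos : (0:ℝ) < 1 - ‖b‖^2 := by nlinarith [norm_nonneg b]
  have he₁n : ‖e₁‖ = 1 := by rw [he₁]; simp
  have he₁c : e₁ ∈ closedBall (0 : EuclideanSpace ℂ (Fin (N+1))) 1 := by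
    rw [mem_closedBall_zero_iff, he₁n]
  -- Schwarz–Pick equality (invariance of the two-point quantity)
  have hQ : ∀ z ∈ ball (0 : EuclideanSpace ℂ (Fin (N+1))) 1,
      ∀ w ∈ ball (0 : EuclideanSpace ℂ (Fin (N+1))) 1,
      (1-‖w‖^2)*(1-‖z‖^2)*‖(1:ℂ) - inner ℂ (φ w) (φ z)‖^2
        = (1-‖φ w‖^2)*(1-‖φ z‖^2)*‖(1:ℂ) - inner ℂ w z‖^2 := by
    intro z hz w hw
    refine le_antisymm
      (schwarz_pick hφ hφm (mem_ball_zero_iff.1 hz) (mem_ball_zero_iff.1 hw)) ?_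
    have h2 := schwarz_pick hφinv hφinvm
      (mem_ball_zero_iff.1 (hφm hz)) (mem_ball_zero_iff.1 (hφm hw))
    rw [hleft w hw, hleft z hz] at h2
    exact h2
  -- one-point identity
  have hK1 : ∀ z ∈ ball (0 : EuclideanSpace ℂ (Fin (N+1))) 1,
      (1-‖φ z‖^2)*(1-‖b‖^2) = (1-‖z‖^2)*‖(1:ℂ) - inner ℂ b (φ z)‖^2 := by
    intro z hz
    have h := hQ z hz 0 h0m
    simp only [norm_zero, inner_zero_left, sub_zero, norm_one, one_pow] at h
    rw [hbdef]
    linear_combination - h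
  -- φ tends to e₁ within the ball
  have htend : Tendsto φ (nhdsWithin e₁ (ball 0 1)) (nhds e₁) := by
    have h3 : Tendsto φ (nhdsWithin e₁ (ball 0 1)) (nhds (φ e₁)) :=
      (hφc e₁ he₁c).mono ball_subset_closedBall
    rwa [hfix] at h3
  have hNe : (nhdsWithin e₁ (ball (0 : EuclideanSpace ℂ (Fin (N+1))) 1)).NeBot := by
    refine mem_closure_iff_nhdsWithin_neBot.1 ?_
    rw [closure_ball (0 : EuclideanSpace ℂ (Fin (N+1))) one_ne_zero]
    exact he₁c
  set L : ℝ := ‖(1:ℂ) - inner ℂ b e₁‖^2 / (1-‖b‖^2) with hLdef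
  have hbe₁ : ‖(1:ℂ) - inner ℂ b e₁‖ ≠ 0 := by
    refine norm_ne_zero_iff.2 fun h => ?_
    have h1 : (1 : ℂ) = inner ℂ b e₁ := by linear_combination h
    have h2 : ‖(inner ℂ b e₁ : ℂ)‖ ≤ ‖b‖ * ‖e₁‖ := norm_inner_le_norm b e₁
    rw [← h1, he₁n] at h2
    simp at h2
    nlinarith
  have hLpos : 0 < L :=
    div_pos (pow_pos (norm_pos_iff.2 (norm_ne_zero_iff.1 hbe₁)) 2) hbpos
  have hLval : ‖(1:ℂ) - inner ℂ b e₁‖^2 = L * (1-‖b‖^2) := by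
    rw [hLdef]; field_simp
  -- limit of the quotient within the ball
  have hconts : Continuous (fun u : EuclideanSpace ℂ (Fin (N+1)) =>
      ‖(1:ℂ) - inner ℂ b u‖^2/(1-‖b‖^2)) := by
    apply Continuous.div_const
    apply Continuous.pow
    apply Continuous.norm
    exact continuous_const.sub (Continuous.inner continuous_const continuous_id)
  have hmain : Tendsto (fun z : EuclideanSpace ℂ (Fin (N + 1)) =>
      (1 - ‖φ z‖ ^ 2) / (1 - ‖z‖ ^ 2)) (nhdsWithin e₁ (ball 0 1)) (nhds L) := by
    have h1 : Tendsto (fun z : EuclideanSpace ℂ (Fin (N+1)) =>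
        ‖(1:ℂ) - inner ℂ b (φ z)‖^2/(1-‖b‖^2)) (nhdsWithin e₁ (ball 0 1)) (nhds L) := by
      have := (hconts.tendsto e₁).comp htend
      simpa [hLdef, Function.comp_def] using this
    apply h1.congr'
    filter_upwards [self_mem_nhdsWithin] with z hz
    have hz' : ‖z‖ < 1 := mem_ball_zero_iff.1 hz
    have hzpos : (0:ℝ) < 1-‖z‖^2 := by nlinarith [norm_nonneg z]
    have h2 := hK1 z hz
    rw [div_eq_div_iff hbpos.ne' hzpos.ne']
    linear_combination - h2

  -- the multiplicative identity for the horocycle function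
  have hK4 : ∀ z ∈ ball (0 : EuclideanSpace ℂ (Fin (N+1))) 1,
      (1-‖z‖^2) * ‖(1:ℂ) - inner ℂ e₁ (φ z)‖^2
        = L * ((1-‖φ z‖^2) * ‖(1:ℂ) - inner ℂ e₁ z‖^2) := by
    intro z hz
    have hptw : ∀ᶠ w in nhdsWithin e₁ (ball (0 : EuclideanSpace ℂ (Fin (N+1))) 1),
        (1-‖z‖^2) * ‖(1:ℂ) - inner ℂ (φ w) (φ z)‖^2 * (1-‖b‖^2)
          = (1-‖φ z‖^2) * ‖(1:ℂ) - inner ℂ b (φ w)‖^2 * ‖(1:ℂ) - inner ℂ w z‖^2 := by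
      filter_upwards [self_mem_nhdsWithin] with w hw
      have hw' : ‖w‖ < 1 := mem_ball_zero_iff.1 hw
      have hwpos : (0:ℝ) < 1-‖w‖^2 := by nlinarith [norm_nonneg w]
      have h1 := hQ z hz w hw
      have h2 := hK1 w hw
      apply mul_left_cancel₀ hwpos.ne'
      linear_combination (1-‖b‖^2) * h1 + (1-‖φ z‖^2) * ‖(1:ℂ) - inner ℂ w z‖^2 * h2
    have t1 : Tendsto (fun w => (1-‖z‖^2) * ‖(1:ℂ) - inner ℂ (φ w) (φ z)‖^2 * (1-‖b‖^2))
        (nhdsWithin e₁ (ball 0 1))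
        (nhds ((1-‖z‖^2) * ‖(1:ℂ) - inner ℂ e₁ (φ z)‖^2 * (1-‖b‖^2))) := by
      have hc : Continuous (fun u : EuclideanSpace ℂ (Fin (N+1)) =>
          (1-‖z‖^2) * ‖(1:ℂ) - inner ℂ u (φ z)‖^2 * (1-‖b‖^2)) := by
        apply Continuous.mul _ continuous_const
        apply Continuous.mul continuous_const
        exact ((continuous_const.sub
          (Continuous.inner continuous_id continuous_const)).norm.pow 2)
      exact (hc.tendsto e₁).comp htend
    have t2 : Tendsto (fun w => (1-‖φ z‖^2) * ‖(1:ℂ) - inner ℂ b (φ w)‖^2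
          * ‖(1:ℂ) - inner ℂ w z‖^2)
        (nhdsWithin e₁ (ball 0 1))
        (nhds ((1-‖φ z‖^2) * ‖(1:ℂ) - inner ℂ b e₁‖^2 * ‖(1:ℂ) - inner ℂ e₁ z‖^2)) := by
      have c1 : Tendsto (fun w => ‖(1:ℂ) - inner ℂ b (φ w)‖^2)
          (nhdsWithin e₁ (ball 0 1)) (nhds (‖(1:ℂ) - inner ℂ b e₁‖^2)) := by
        have hc : Continuous (fun u : EuclideanSpace ℂ (Fin (N+1)) =>
            ‖(1:ℂ) - inner ℂ b u‖^2) :=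
          (continuous_const.sub (Continuous.inner continuous_const continuous_id)).norm.pow 2
        exact (hc.tendsto e₁).comp htend
      have c2 : Tendsto (fun w : EuclideanSpace ℂ (Fin (N+1)) => ‖(1:ℂ) - inner ℂ w z‖^2)
          (nhdsWithin e₁ (ball 0 1)) (nhds (‖(1:ℂ) - inner ℂ e₁ z‖^2)) := by
        have hc : Continuous (fun u : EuclideanSpace ℂ (Fin (N+1)) =>
            ‖(1:ℂ) - inner ℂ u z‖^2) :=
          (continuous_const.sub (Continuous.inner continuous_id continuous_const)).norm.pow 2
        exact (hc.tendsto e₁).mono_left nhdsWithin_le_nhds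
      exact (tendsto_const_nhds.mul c1).mul c2
    have huniq := tendsto_nhds_unique (t1.congr' hptw) t2
    have huniq2 : ((1-‖z‖^2) * ‖(1:ℂ) - inner ℂ e₁ (φ z)‖^2) * (1-‖b‖^2)
        = (L * ((1-‖φ z‖^2) * ‖(1:ℂ) - inner ℂ e₁ z‖^2)) * (1-‖b‖^2) := by
      linear_combination huniq + (1-‖φ z‖^2) * ‖(1:ℂ) - inner ℂ e₁ z‖^2 * hLval
    exact mul_right_cancel₀ hbpos.ne' huniq2
  have hcontb : Continuous (fun v : EuclideanSpace ℂ (Fin (N+1)) =>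
      ‖(1:ℂ) - inner ℂ b v‖^2) :=
    (continuous_const.sub (Continuous.inner continuous_const continuous_id)).norm.pow 2
  -- reduce to L = 1
  have hL1 : L = 1 := by
    rcases lt_trichotomy L 1 with hLlt | hLeq | hLgt
    · -- L < 1 : the backward orbit converges to e₁, contradiction
      exfalso
      set u : ℕ → EuclideanSpace ℂ (Fin (N+1)) := fun n => φinv^[n] 0 with hu
      have husucc : ∀ n, u (n+1) = φinv (u n) := by
        intro n
        simp only [hu]
        exact Function.iterate_succ_apply' φinv n 0
      have hu0 : u 0 = 0 := by simp only [hu]; rfl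
      have humem : ∀ n, u n ∈ ball (0 : EuclideanSpace ℂ (Fin (N+1))) 1 := by
        intro n; induction n with
        | zero => rw [hu0]; exact h0m
        | succ n ih =>
          rw [husucc n]
          exact hφinvm ih
      have humem' : ∀ n, ‖u n‖ < 1 := fun n => mem_ball_zero_iff.1 (humem n)
      have hxpos : ∀ n, (0:ℝ) < 1-‖u n‖^2 := fun n => by
        nlinarith [humem' n, norm_nonneg (u n)]
      have hustep : ∀ n, φ (u (n+1)) = u n := by
        intro n
        rw [husucc n]
        exact hright _ (humem n)
      have hF : ∀ n, ‖(1:ℂ) - inner ℂ e₁ (u n)‖^2 * L^n = 1-‖u n‖^2 := by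
        intro n; induction n with
        | zero => simp [hu0]
        | succ n ih =>
          have h4 := hK4 (u (n+1)) (humem (n+1))
          rw [hustep n] at h4
          apply mul_left_cancel₀ (hxpos n).ne'
          linear_combination (-(L^n)) * h4 + (1-‖u (n+1)‖^2) * ih
      have hsmall : ∀ n, 1-‖u n‖^2 ≤ 4 * L^n := by
        intro n
        rw [← hF n]
        have hle : ‖(1:ℂ) - inner ℂ e₁ (u n)‖ ≤ 2 := by
          calc ‖(1:ℂ) - inner ℂ e₁ (u n)‖ ≤ ‖(1:ℂ)‖ + ‖(inner ℂ e₁ (u n) : ℂ)‖ := norm_sub_le _ _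
            _ ≤ 1 + ‖e₁‖ * ‖u n‖ := by
                have := norm_inner_le_norm (𝕜 := ℂ) e₁ (u n)
                simp only [norm_one]
                linarith
            _ ≤ 2 := by rw [he₁n]; nlinarith [humem' n, norm_nonneg (u n)]
        have hX4 : ‖(1:ℂ) - inner ℂ e₁ (u n)‖^2 ≤ 4 := by
          nlinarith [norm_nonneg ((1:ℂ) - inner ℂ e₁ (u n))]
        nlinarith [mul_le_mul_of_nonneg_right hX4 (pow_pos hLpos n).le]
      have hQorb : ∀ n, ‖(1:ℂ) - inner ℂ (u n) (u (n+1))‖^2 * (1-‖u 1‖^2)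
          = (1-‖u n‖^2)*(1-‖u (n+1)‖^2) := by
        intro n; induction n with
        | zero => simp [hu0]
        | succ n ih =>
          have h7 := hQ (u (n+1)) (humem (n+1)) (u (n+2)) (humem (n+2))
          rw [hustep (n+1), hustep n] at h7
          rw [norm_one_sub_inner_comm (u (n+1)) (u n)] at h7
          rw [norm_one_sub_inner_comm (u (n+2)) (u (n+1))] at h7
          apply mul_left_cancel₀ (mul_pos (hxpos n) (hxpos (n+1))).ne'
          linear_combination (-(1-‖u 1‖^2)) * h7
            + (1-‖u (n+1)‖^2)*(1-‖u (n+2)‖^2) * ih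
      have hu1pos : (0:ℝ) < 1-‖u 1‖^2 := hxpos 1
      have hue : Tendsto u atTop (nhds e₁) :=
        orbit_tendsto hφc honly humem' (Or.inr hustep) hLpos hLlt hsmall hu1pos hQorb
      have h8 : Tendsto (fun n => ‖(1:ℂ) - inner ℂ b (u n)‖^2) atTop
          (nhds (‖(1:ℂ) - inner ℂ b e₁‖^2)) :=
        (hcontb.tendsto e₁).comp hue
      set q : ℝ := (1+L)/2 with hqdef
      have hq0 : (0:ℝ) < q := by positivity
      have hq1 : q < 1 := by linarith
      have hqinv : 1 < q⁻¹ := by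
        rw [← one_div, lt_div_iff₀ hq0]
        linarith
      have hqL : ‖(1:ℂ) - inner ℂ b e₁‖^2 < q*(1-‖b‖^2) := by
        rw [hLval]
        nlinarith
      have h9 := h8.eventually (eventually_lt_nhds hqL)
      obtain ⟨n₀, hn₀⟩ := eventually_atTop.1 h9
      refine growth_contra (x := fun k => 1-‖u (n₀+k)‖^2) (fun k => hxpos _)
        (fun k => by show 1 - ‖u (n₀+k)‖^2 ≤ 1; nlinarith [norm_nonneg (u (n₀+k))]) hqinv ?_
      intro k
      have h10 := hK1 (u (n₀+k+1)) (humem (n₀+k+1))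
      rw [hustep (n₀+k)] at h10
      have h11 : ‖(1:ℂ) - inner ℂ b (u (n₀+k))‖^2 < q*(1-‖b‖^2) :=
        hn₀ _ (Nat.le_add_right _ _)
      show q⁻¹ * (1-‖u (n₀+k)‖^2) ≤ 1-‖u (n₀+k+1)‖^2
      rw [← one_div, one_div_mul_eq_div, div_le_iff₀ hq0]
      nlinarith [hxpos (n₀+k), hxpos (n₀+k+1), hbpos,
        mul_lt_mul_of_pos_left h11 (hxpos (n₀+k+1))]
    · exact hLeq
    · -- L > 1 : the forward orbit converges to e₁, contradiction
      exfalso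
      set u : ℕ → EuclideanSpace ℂ (Fin (N+1)) := fun n => φ^[n] 0 with hu
      have hustep : ∀ n, φ (u n) = u (n+1) := by
        intro n
        simp only [hu]
        exact (Function.iterate_succ_apply' φ n 0).symm
      have hu0 : u 0 = 0 := by simp only [hu]; rfl
      have humem : ∀ n, u n ∈ ball (0 : EuclideanSpace ℂ (Fin (N+1))) 1 := by
        intro n; induction n with
        | zero => rw [hu0]; exact h0m
        | succ n ih =>
          rw [← hustep n]
          exact hφm ih
      have humem' : ∀ n, ‖u n‖ < 1 := fun n => mem_ball_zero_iff.1 (humem n)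
      have hxpos : ∀ n, (0:ℝ) < 1-‖u n‖^2 := fun n => by
        nlinarith [humem' n, norm_nonneg (u n)]
      have hLinv0 : (0:ℝ) < L⁻¹ := by positivity
      have hLinv1 : L⁻¹ < 1 := by
        rw [← one_div, div_lt_iff₀ hLpos]
        linarith
      have hF : ∀ n, ‖(1:ℂ) - inner ℂ e₁ (u n)‖^2 = L^n * (1-‖u n‖^2) := by
        intro n; induction n with
        | zero => simp [hu0]
        | succ n ih =>
          have h4 := hK4 (u n) (humem n)
          rw [hustep n] at h4
          apply mul_left_cancel₀ (hxpos n).ne'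
          linear_combination h4 + L*(1-‖u (n+1)‖^2) * ih
      have hsmall : ∀ n, 1-‖u n‖^2 ≤ 4 * (L⁻¹)^n := by
        intro n
        have hle : ‖(1:ℂ) - inner ℂ e₁ (u n)‖ ≤ 2 := by
          calc ‖(1:ℂ) - inner ℂ e₁ (u n)‖ ≤ ‖(1:ℂ)‖ + ‖(inner ℂ e₁ (u n) : ℂ)‖ := norm_sub_le _ _
            _ ≤ 1 + ‖e₁‖ * ‖u n‖ := by
                have := norm_inner_le_norm (𝕜 := ℂ) e₁ (u n)
                simp only [norm_one]
                linarith
            _ ≤ 2 := by rw [he₁n]; nlinarith [humem' n, norm_nonneg (u n)]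
        have h5 : L^n * (1-‖u n‖^2) ≤ 4 := by
          rw [← hF n]
          nlinarith [norm_nonneg ((1:ℂ) - inner ℂ e₁ (u n))]
        have h6 : (0:ℝ) < L^n := pow_pos hLpos n
        rw [inv_pow, show (4:ℝ) * (L^n)⁻¹ = 4/(L^n) by ring, le_div_iff₀ h6]
        linarith [h5]
      have hQorb : ∀ n, ‖(1:ℂ) - inner ℂ (u n) (u (n+1))‖^2 * (1-‖u 1‖^2)
          = (1-‖u n‖^2)*(1-‖u (n+1)‖^2) := by
        intro n; induction n with
        | zero => simp [hu0]
        | succ n ih =>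
          have h7 := hQ (u (n+1)) (humem (n+1)) (u n) (humem n)
          rw [hustep n, hustep (n+1)] at h7
          apply mul_left_cancel₀ (mul_pos (hxpos n) (hxpos (n+1))).ne'
          linear_combination (1-‖u 1‖^2) * h7
            + (1-‖u (n+1)‖^2)*(1-‖u (n+2)‖^2) * ih
      have hu1pos : (0:ℝ) < 1-‖u 1‖^2 := hxpos 1
      have hue : Tendsto u atTop (nhds e₁) :=
        orbit_tendsto hφc honly humem' (Or.inl hustep) hLinv0 hLinv1 hsmall hu1pos hQorb
      have h8 : Tendsto (fun n => ‖(1:ℂ) - inner ℂ b (u (n+1))‖^2) atTop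
          (nhds (‖(1:ℂ) - inner ℂ b e₁‖^2)) :=
        (hcontb.tendsto e₁).comp (hue.comp (tendsto_add_atTop_nat 1))
      set q : ℝ := (1+L)/2 with hqdef
      have hq1 : 1 < q := by linarith
      have hqL : q*(1-‖b‖^2) < ‖(1:ℂ) - inner ℂ b e₁‖^2 := by
        rw [hLval]
        nlinarith
      have h9 := h8.eventually (eventually_gt_nhds hqL)
      obtain ⟨n₀, hn₀⟩ := eventually_atTop.1 h9
      refine growth_contra (x := fun k => 1-‖u (n₀+k)‖^2) (fun k => hxpos _)
        (fun k => by show 1 - ‖u (n₀+k)‖^2 ≤ 1; nlinarith [norm_nonneg (u (n₀+k))]) hq1 ?_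
      intro k
      have h10 := hK1 (u (n₀+k)) (humem (n₀+k))
      rw [hustep (n₀+k)] at h10
      have h11 : q*(1-‖b‖^2) < ‖(1:ℂ) - inner ℂ b (u (n₀+k+1))‖^2 :=
        hn₀ _ (Nat.le_add_right _ _)
      show q * (1-‖u (n₀+k)‖^2) ≤ 1-‖u (n₀+k+1)‖^2
      nlinarith [hxpos (n₀+k), hxpos (n₀+k+1), hbpos,
        mul_lt_mul_of_pos_left h11 (hxpos (n₀+k))]
  rw [hL1] at hmain
  exact hmain
end
end

section
/- Let $\varphi(z) = \frac{z+s}{1+sz}$ with $s \in (0,1)$ and let $\psi$ be holomorphic on $\mathbb{D}$, continuous on $\overline{\mathbb{D}}$, and bounded away from zero. If $\lambda$ belongs to the spectrum of the weighted composition operator $C_{\psi,\varphi}$ on $H^2(\mathbb{D})$, then $e^{i\theta}\lambda$ belongs to the spectrum for every $\theta \in \mathbb{R}$; that is, the spectrum of $C_{\psi,\varphi}$ is invariant under rotation. -/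
open Metric

/-- The Hardy space `H²(𝔻)`, modelled as the space of square-summable Taylor coefficient
sequences. -/
abbrev H2 : Type := lp (fun _ : ℕ => ℂ) 2

/-- The holomorphic function on the unit disc associated to an element of `H²(𝔻)`. -/
noncomputable def H2.toFun (f : H2) (z : ℂ) : ℂ := ∑' n : ℕ, f n * z ^ n

open MeasureTheory Real FormalMultilinearSeries

section prelim

noncomputable def fms (c : ℕ → ℂ) : FormalMultilinearSeries ℂ ℂ ℂ :=
  FormalMultilinearSeries.ofScalars ℂ c

lemma fms_norm (c : ℕ → ℂ) (n : ℕ) : ‖fms c n‖ = ‖c n‖ := by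
  rw [fms, FormalMultilinearSeries.ofScalars_norm]

lemma fms_radius {c : ℕ → ℂ} {B : ℝ} (hB : ∀ n, ‖c n‖ ≤ B) : 1 ≤ (fms c).radius := by
  have := (fms c).le_radius_of_bound B (r := 1) (fun n => by
    rw [fms_norm]; simpa using hB n)
  simpa using this

lemma fms_hasSum {c : ℕ → ℂ} {B : ℝ} (hB : ∀ n, ‖c n‖ ≤ B) {z : ℂ} (hz : ‖z‖ < 1) :
    HasSum (fun n => c n * z ^ n) ((fms c).sum z) := by
  have hz' : z ∈ EMetric.ball (0 : ℂ) (fms c).radius := by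
    refine lt_of_lt_of_le ?_ (fms_radius hB)
    simpa [enorm_eq_nnnorm] using (by exact_mod_cast hz : (‖z‖₊ : ENNReal) < 1)
  have := (fms c).hasSum hz'
  have h : ∀ n, (fms c n fun _ => z) = c n * z ^ n := fun n =>
    by rw [fms, ofScalars_apply_eq, smul_eq_mul]
  simpa [h] using this

lemma fms_hasFPowerSeries {c : ℕ → ℂ} {B : ℝ} (hB : ∀ n, ‖c n‖ ≤ B) {g : ℂ → ℂ}
    (hg : ∀ z ∈ ball (0 : ℂ) 1, HasSum (fun n => c n * z ^ n) (g z)) :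
    HasFPowerSeriesOnBall g (fms c) 0 1 := by
  refine ⟨fms_radius hB, one_pos, ?_⟩
  intro y hy
  have hy' : ‖y‖ < 1 := by
    exact_mod_cast (by simpa [enorm_eq_nnnorm] using hy : ‖y‖₊ < 1)
  have := hg y (by simpa [mem_ball, dist_eq_norm] using hy')
  have h : ∀ n, (fms c n fun _ => y) = c n * y ^ n := fun n =>
    by rw [fms, ofScalars_apply_eq, smul_eq_mul]
  simpa [h, zero_add] using this

lemma coeff_unique {c d : ℕ → ℂ} {B B' : ℝ} (hB : ∀ n, ‖c n‖ ≤ B) (hB' : ∀ n, ‖d n‖ ≤ B')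
    {g : ℂ → ℂ} (hg : ∀ z ∈ ball (0 : ℂ) 1, HasSum (fun n => c n * z ^ n) (g z))
    (hg' : ∀ z ∈ ball (0 : ℂ) 1, HasSum (fun n => d n * z ^ n) (g z)) : c = d := by
  have h1 := (fms_hasFPowerSeries hB hg).hasFPowerSeriesAt
  have h2 := (fms_hasFPowerSeries hB' hg').hasFPowerSeriesAt
  have := h1.eq_formalMultilinearSeries h2
  exact FormalMultilinearSeries.ofScalars_series_injective ℂ ℂ this
lemma H2.coeff_le_norm (f : H2) (n : ℕ) : ‖f n‖ ≤ ‖f‖ :=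
  lp.norm_apply_le_norm two_ne_zero f n

lemma H2.hasSum_toFun (f : H2) {z : ℂ} (hz : ‖z‖ < 1) :
    HasSum (fun n => f n * z ^ n) (f.toFun z) := by
  have h := fms_hasSum (B := ‖f‖) (fun n => f.coeff_le_norm n) hz
  have heq : (∑' n : ℕ, f n * z ^ n) = (fms (f : ℕ → ℂ)).sum z :=
    h.tsum_eq
  rw [H2.toFun, heq]
  exact h

lemma H2.ext_toFun {f g : H2} (h : ∀ z ∈ ball (0 : ℂ) 1, f.toFun z = g.toFun z) : f = g := by
  have := coeff_unique (B := ‖f‖) (B' := ‖g‖) (fun n => f.coeff_le_norm n)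
    (fun n => g.coeff_le_norm n) (g := f.toFun)
    (fun z hz => f.hasSum_toFun (by simpa [mem_ball, dist_eq_norm] using hz))
    (fun z hz => (h z hz) ▸ g.hasSum_toFun (by simpa [mem_ball, dist_eq_norm] using hz))
  ext n
  exact congrFun this n

lemma H2.differentiableOn_toFun (f : H2) :
    DifferentiableOn ℂ f.toFun (ball (0 : ℂ) 1) := by
  have hball : HasFPowerSeriesOnBall f.toFun (fms (f : ℕ → ℂ)) 0 1 :=
    fms_hasFPowerSeries (B := ‖f‖) (fun n => f.coeff_le_norm n)
      (fun z hz => f.hasSum_toFun (by simpa [mem_ball, dist_eq_norm] using hz))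
  have hdiff := hball.differentiableOn
  have hsub : ball (0 : ℂ) 1 ⊆ EMetric.ball (0 : ℂ) 1 := by
    intro x hx
    have : ‖x‖ < 1 := by simpa [mem_ball, dist_eq_norm] using hx
    show edist x 0 < 1
    simpa [edist_zero_right, enorm_eq_nnnorm] using
      (by exact_mod_cast this : (‖x‖₊ : ENNReal) < 1)
  exact hdiff.mono hsub


noncomputable def ec (j : ℤ) (t : ℝ) : ℂ := Complex.exp ((2 * Real.pi * t * j : ℝ) * Complex.I)

lemma ec_norm (j : ℤ) (t : ℝ) : ‖ec j t‖ = 1 := by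
  rw [ec]
  exact Complex.norm_exp_ofReal_mul_I _

lemma ec_mul (j k : ℤ) (t : ℝ) : ec j t * ec k t = ec (j + k) t := by
  rw [ec, ec, ec, ← Complex.exp_add]
  congr 1
  push_cast
  ring

lemma ec_conj (j : ℤ) (t : ℝ) : (starRingEnd ℂ) (ec j t) = ec (-j) t := by
  rw [ec, ec, ← Complex.exp_conj]
  congr 1
  rw [map_mul, Complex.conj_I, Complex.conj_ofReal]
  push_cast
  ring

lemma ec_continuous (j : ℤ) : Continuous (ec j) := by
  unfold ec; fun_prop

lemma ec_integral (j : ℤ) : (∫ t in Set.Ioc (0:ℝ) 1, ec j t) = if j = 0 then 1 else 0 := by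
  rw [← intervalIntegral.integral_of_le (zero_le_one)]
  by_cases hj : j = 0
  · simp [hj, ec]
  · have h2 : ∀ t : ℝ, ec j t = Complex.exp (((2 * Real.pi * j : ℝ) * Complex.I) * t) := by
      intro t; rw [ec]; congr 1; push_cast; ring
    have hc : ((2 * Real.pi * j : ℝ) : ℂ) * Complex.I ≠ 0 := by
      apply mul_ne_zero _ Complex.I_ne_zero
      exact_mod_cast mul_ne_zero (mul_ne_zero (two_ne_zero) Real.pi_ne_zero)
        (Int.cast_ne_zero.mpr hj)
    simp only [h2]
    rw [integral_exp_mul_complex hc]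
    have key : (((2 * Real.pi * j : ℝ) : ℂ) * Complex.I * 1) = (j : ℂ) * (2 * Real.pi * Complex.I) := by
      push_cast
      ring
    simp only [Complex.ofReal_one, Complex.ofReal_zero, mul_zero, Complex.exp_zero, mul_one] at *
    rw [show (((2 * Real.pi * j : ℝ) : ℂ) * Complex.I) = (j : ℂ) * (2 * Real.pi * Complex.I) by
      push_cast; ring, Complex.exp_int_mul_two_pi_mul_I j]
    simp [hj]

/-- The circle parametrization. -/
noncomputable def circ (r : ℝ) (t : ℝ) : ℂ := (r : ℂ) * ec 1 t

lemma circ_mem {r : ℝ} (hr0 : 0 < r) (hr1 : r < 1) (t : ℝ) : circ r t ∈ ball (0:ℂ) 1 := by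
  simp only [mem_ball, dist_eq_norm, sub_zero, circ, norm_mul]
  rw [ec_norm]
  simpa [abs_of_pos hr0] using hr1

lemma circ_pow (r : ℝ) (t : ℝ) (n : ℕ) : circ r t ^ n = (r : ℂ) ^ n * ec n t := by
  rw [circ, mul_pow]
  congr 1
  rw [ec, ec, ← Complex.exp_nat_mul]
  congr 1
  push_cast
  ring

lemma summable_geom_aux {c : ℕ → ℂ} {v : ℂ → ℂ}
    (hsum : ∀ z ∈ ball (0:ℂ) 1, HasSum (fun n => c n * z ^ n) (v z))
    {r : ℝ} (hr0 : 0 < r) (hr1 : r < 1) : Summable (fun n => ‖c n‖ * r ^ n) := by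
  obtain ⟨r', hrr', hr'1⟩ := exists_between hr1
  have hr'0 : 0 < r' := lt_trans hr0 hrr'
  have h := (hsum (r' : ℂ) (by simpa [mem_ball, dist_eq_norm, abs_of_pos hr'0] using hr'1)).summable
  have h0 : Filter.Tendsto (fun n => ‖c n * (r':ℂ) ^ n‖) Filter.atTop (nhds 0) := by
    simpa using h.tendsto_atTop_zero.norm
  have hev : ∀ᶠ n in Filter.atTop, ‖‖c n‖ * r ^ n‖ ≤ (r / r') ^ n := by
    have h1 : ∀ᶠ n in Filter.atTop, ‖c n * (r':ℂ) ^ n‖ ≤ 1 :=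
      h0.eventually_le_const (by norm_num)
    filter_upwards [h1] with n hn
    have hnorm : ‖c n * (r':ℂ) ^ n‖ = ‖c n‖ * r' ^ n := by
      simp [norm_mul, norm_pow, Complex.norm_real, abs_of_pos hr'0]
    rw [hnorm] at hn
    have : ‖c n‖ ≤ 1 / r' ^ n := by
      rw [le_div_iff₀ (by positivity)]
      linarith
    have h3 : ‖c n‖ * r ^ n ≤ (1 / r' ^ n) * r ^ n :=
      mul_le_mul_of_nonneg_right this (by positivity)
    calc ‖‖c n‖ * r ^ n‖ = ‖c n‖ * r ^ n := by
          rw [Real.norm_of_nonneg (by positivity)]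
      _ ≤ (1 / r' ^ n) * r ^ n := h3
      _ = (r / r') ^ n := by rw [div_pow, one_div, inv_mul_eq_div]

  exact Summable.of_norm_bounded_eventually_nat (summable_geometric_of_lt_one
    (by positivity) (by rw [div_lt_one hr'0]; exact hrr')) hev
lemma parseval {v : ℂ → ℂ} (hv : ContinuousOn v (ball (0:ℂ) 1)) {c : ℕ → ℂ}
    (hsum : ∀ z ∈ ball (0:ℂ) 1, HasSum (fun n => c n * z ^ n) (v z))
    {r : ℝ} (hr0 : 0 < r) (hr1 : r < 1) :
    HasSum (fun n => ‖c n‖ ^ 2 * r ^ (2 * n))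
      (∫ t in Set.Ioc (0:ℝ) 1, ‖v (circ r t)‖ ^ 2) := by
  set V : ℝ → ℂ := fun t => v (circ r t) with hV
  have hcc : Continuous (circ r) := by unfold circ ec; fun_prop
  have hVc : Continuous V := hv.comp_continuous hcc (circ_mem hr0 hr1)
  have hVs : ∀ t, HasSum (fun n : ℕ => c n * (r:ℂ) ^ n * ec n t) (V t) := by
    intro t
    have h := hsum _ (circ_mem hr0 hr1 t)
    simp only [circ_pow] at h
    simpa [mul_assoc] using h
  have hcs : Summable (fun n => ‖c n‖ * r ^ n) := summable_geom_aux hsum hr0 hr1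
  have hnormc : ∀ k : ℕ, ‖c k * (r:ℂ) ^ k‖ = ‖c k‖ * r ^ k := by
    intro k
    rw [norm_mul, norm_pow, Complex.norm_real, Real.norm_of_nonneg hr0.le]
  -- Step A : Fourier coefficients of V
  have hA : ∀ m : ℕ, (∫ t in Set.Ioc (0:ℝ) 1, ec (-(m:ℤ)) t * V t) = c m * (r:ℂ) ^ m := by
    intro m
    have hpt : ∀ t, ec (-(m:ℤ)) t * V t
        = ∑' k : ℕ, (c k * (r:ℂ) ^ k) * ec ((k:ℤ) - m) t := by
      intro t
      have h := (hVs t).mul_left (ec (-(m:ℤ)) t)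
      have he : (fun k : ℕ => ec (-(m:ℤ)) t * (c k * (r:ℂ) ^ k * ec (k:ℤ) t))
          = fun k : ℕ => (c k * (r:ℂ) ^ k) * ec ((k:ℤ) - m) t := by
        funext k
        rw [mul_comm (ec _ t) _, mul_assoc, ec_mul, sub_eq_add_neg]
      rw [he] at h
      exact h.tsum_eq.symm
    have hint : ∀ k : ℕ, Integrable (fun t => (c k * (r:ℂ) ^ k) * ec ((k:ℤ) - m) t)
        (volume.restrict (Set.Ioc (0:ℝ) 1)) :=
      fun k => (continuous_const.mul (ec_continuous _)).integrableOn_Ioc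
    have hnrm : Summable fun k : ℕ =>
        ∫ t in Set.Ioc (0:ℝ) 1, ‖(c k * (r:ℂ) ^ k) * ec ((k:ℤ) - m) t‖ := by
      have : ∀ k : ℕ, (∫ t in Set.Ioc (0:ℝ) 1, ‖(c k * (r:ℂ) ^ k) * ec ((k:ℤ) - m) t‖)
          = ‖c k‖ * r ^ k := by
        intro k
        have he : (fun t => ‖(c k * (r:ℂ) ^ k) * ec ((k:ℤ) - m) t‖)
            = fun _ => ‖c k‖ * r ^ k := by
          funext t; rw [norm_mul, ec_norm, mul_one, hnormc]
        rw [he, setIntegral_const]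
        simp [Real.volume_Ioc]
      rw [funext this]
      exact hcs
    have hswap := MeasureTheory.hasSum_integral_of_summable_integral_norm hint hnrm
    have hval : (fun k : ℕ => ∫ t in Set.Ioc (0:ℝ) 1, (c k * (r:ℂ) ^ k) * ec ((k:ℤ) - m) t)
        = fun k : ℕ => if k = m then c m * (r:ℂ) ^ m else 0 := by
      funext k
      rw [MeasureTheory.integral_const_mul _ _, ec_integral]
      by_cases hk : k = m
      · subst hk; simp
      · have : ((k:ℤ) - m) ≠ 0 := sub_ne_zero.mpr (by exact_mod_cast hk)
        simp [this, hk]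
    rw [hval] at hswap
    have := hswap.unique (hasSum_ite_eq m (c m * (r:ℂ) ^ m))
    calc (∫ t in Set.Ioc (0:ℝ) 1, ec (-(m:ℤ)) t * V t)
        = ∫ t in Set.Ioc (0:ℝ) 1, ∑' k : ℕ, (c k * (r:ℂ) ^ k) * ec ((k:ℤ) - m) t := by
          simp only [hpt]
      _ = c m * (r:ℂ) ^ m := this
  -- Step B : Parseval, complex form
  have hB : HasSum (fun m : ℕ => (c m * (r:ℂ) ^ m) * (starRingEnd ℂ) (c m * (r:ℂ) ^ m))
      (∫ t in Set.Ioc (0:ℝ) 1, V t * (starRingEnd ℂ) (V t)) := by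
    have hpt : ∀ t, V t * (starRingEnd ℂ) (V t)
        = ∑' m : ℕ, (c m * (r:ℂ) ^ m) * ec (m:ℤ) t * (starRingEnd ℂ) (V t) := by
      intro t
      exact ((hVs t).mul_right ((starRingEnd ℂ) (V t))).tsum_eq.symm
    have hint : ∀ m : ℕ, Integrable
        (fun t => (c m * (r:ℂ) ^ m) * ec (m:ℤ) t * (starRingEnd ℂ) (V t))
        (volume.restrict (Set.Ioc (0:ℝ) 1)) := by
      intro m
      exact ((continuous_const.mul (ec_continuous _)).mul (Complex.continuous_conj.comp hVc)).integrableOn_Ioc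
    have hnrm : Summable fun m : ℕ => ∫ t in Set.Ioc (0:ℝ) 1,
        ‖(c m * (r:ℂ) ^ m) * ec (m:ℤ) t * (starRingEnd ℂ) (V t)‖ := by
      have hval : ∀ m : ℕ, (∫ t in Set.Ioc (0:ℝ) 1,
          ‖(c m * (r:ℂ) ^ m) * ec (m:ℤ) t * (starRingEnd ℂ) (V t)‖)
          = (‖c m‖ * r ^ m) * ∫ t in Set.Ioc (0:ℝ) 1, ‖V t‖ := by
        intro m
        have he : (fun t => ‖(c m * (r:ℂ) ^ m) * ec (m:ℤ) t * (starRingEnd ℂ) (V t)‖)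
            = fun t => (‖c m‖ * r ^ m) * ‖V t‖ := by
          funext t
          rw [norm_mul, norm_mul, ec_norm, mul_one, hnormc, RCLike.norm_conj]
        rw [he, MeasureTheory.integral_const_mul _ _]
      rw [funext hval]
      exact hcs.mul_right _
    have hswap := MeasureTheory.hasSum_integral_of_summable_integral_norm hint hnrm
    have hval : (fun m : ℕ => ∫ t in Set.Ioc (0:ℝ) 1,
        (c m * (r:ℂ) ^ m) * ec (m:ℤ) t * (starRingEnd ℂ) (V t))
        = fun m : ℕ => (c m * (r:ℂ) ^ m) * (starRingEnd ℂ) (c m * (r:ℂ) ^ m) := by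
      funext m
      have he : (fun t => (c m * (r:ℂ) ^ m) * ec (m:ℤ) t * (starRingEnd ℂ) (V t))
          = fun t => (c m * (r:ℂ) ^ m) * (starRingEnd ℂ) (ec (-(m:ℤ)) t * V t) := by
        funext t
        rw [map_mul, ec_conj, neg_neg]
        ring
      rw [he, MeasureTheory.integral_const_mul _ _, integral_conj, hA m]
    rw [hval] at hswap
    have hgoal : (∫ t in Set.Ioc (0:ℝ) 1, ∑' m : ℕ,
        (c m * (r:ℂ) ^ m) * ec (m:ℤ) t * (starRingEnd ℂ) (V t))
        = ∫ t in Set.Ioc (0:ℝ) 1, V t * (starRingEnd ℂ) (V t) := by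
      simp only [hpt]
    rwa [hgoal] at hswap
  -- Step C : realify
  have hterm : (fun m : ℕ => (c m * (r:ℂ) ^ m) * (starRingEnd ℂ) (c m * (r:ℂ) ^ m))
      = fun m : ℕ => ((‖c m‖ ^ 2 * r ^ (2 * m) : ℝ) : ℂ) := by
    funext m
    rw [Complex.mul_conj]
    norm_cast
    rw [Complex.normSq_eq_norm_sq]
    push_cast
    rw [hnormc]
    rw [mul_pow, ← pow_mul, mul_comm m 2]
  have hintg : (∫ t in Set.Ioc (0:ℝ) 1, V t * (starRingEnd ℂ) (V t))
      = ((∫ t in Set.Ioc (0:ℝ) 1, ‖V t‖ ^ 2 : ℝ) : ℂ) := by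
    have he : (fun t => V t * (starRingEnd ℂ) (V t)) = fun t => ((‖V t‖ ^ 2 : ℝ) : ℂ) := by
      funext t
      rw [Complex.mul_conj]
      norm_cast
      rw [Complex.normSq_eq_norm_sq]
    rw [he]
    exact integral_ofReal
  rw [hterm, hintg] at hB
  exact Complex.hasSum_ofReal.mp hB
lemma H2.summable_sq (f : H2) : Summable (fun n => ‖f n‖ ^ 2) := by
  have h := (lp.memℓp f)
  rw [memℓp_gen_iff (by norm_num : 0 < (2 : ENNReal).toReal)] at h
  have : (fun n => ‖f n‖ ^ ((2:ENNReal).toReal)) = fun n => ‖f n‖ ^ 2 := by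
    funext n
    rw [ENNReal.toReal_ofNat, show ((2:ℝ) = ((2:ℕ):ℝ)) by norm_num, Real.rpow_natCast]
  rwa [this] at h

lemma H2.tsum_sq (f : H2) : ∑' n, ‖f n‖ ^ 2 = ‖f‖ ^ 2 := by
  have h := lp.norm_rpow_eq_tsum (p := 2) (by norm_num) f
  have h2 : (fun n => ‖f n‖ ^ ((2:ENNReal).toReal)) = fun n => ‖f n‖ ^ 2 := by
    funext n
    rw [ENNReal.toReal_ofNat, show ((2:ℝ) = ((2:ℕ):ℝ)) by norm_num, Real.rpow_natCast]
  rw [h2] at h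
  rw [← h, ENNReal.toReal_ofNat, show ((2:ℝ) = ((2:ℕ):ℝ)) by norm_num, Real.rpow_natCast]

section mulOp
variable (G : ℂ → ℂ)

noncomputable def mulAux (f : H2) : ℕ → ℂ :=
  fun n => ((Nat.factorial n : ℂ))⁻¹ * iteratedDeriv n (fun z => G z * H2.toFun f z) 0

variable {G} (hGd : DifferentiableOn ℂ G (ball (0:ℂ) 1))
  {C : ℝ} (hC : 0 ≤ C) (hGb : ∀ z ∈ ball (0:ℂ) 1, ‖G z‖ ≤ C)

include hGd in
lemma mulAux_hasSum (f : H2) : ∀ z ∈ ball (0:ℂ) 1,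
    HasSum (fun n => mulAux G f n * z ^ n) (G z * f.toFun z) := by
  intro z hz
  have hv : DifferentiableOn ℂ (fun z => G z * H2.toFun f z) (ball (0:ℂ) 1) :=
    hGd.mul f.differentiableOn_toFun
  have h := Complex.hasSum_taylorSeries_on_ball hv hz
  have he : (fun n : ℕ => ((Nat.factorial n : ℂ))⁻¹ • (z - 0) ^ n •
      iteratedDeriv n (fun z => G z * H2.toFun f z) 0)
      = fun n => mulAux G f n * z ^ n := by
    funext n
    simp only [mulAux, smul_eq_mul, sub_zero]
    ring
  rwa [he] at h

include hGd hGb hC in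
lemma mulAux_bound (f : H2) (N : ℕ) :
    ∑ n ∈ Finset.range N, ‖mulAux G f n‖ ^ 2 ≤ (C * ‖f‖) ^ 2 := by
  have key : ∀ r : ℝ, 0 < r → r < 1 →
      ∑ n ∈ Finset.range N, ‖mulAux G f n‖ ^ 2 * r ^ (2 * n) ≤ (C * ‖f‖) ^ 2 := by
    intro r hr0 hr1
    have hvc : ContinuousOn (fun z => G z * H2.toFun f z) (ball (0:ℂ) 1) :=
      (hGd.mul f.differentiableOn_toFun).continuousOn
    have hPv := parseval hvc (mulAux_hasSum hGd f) hr0 hr1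
    have hPf := parseval (f.differentiableOn_toFun.continuousOn)
      (fun z hz => f.hasSum_toFun (by simpa [mem_ball, dist_eq_norm] using hz)) hr0 hr1
    have hle : (∫ t in Set.Ioc (0:ℝ) 1, ‖G (circ r t) * H2.toFun f (circ r t)‖ ^ 2)
        ≤ C ^ 2 * ∫ t in Set.Ioc (0:ℝ) 1, ‖H2.toFun f (circ r t)‖ ^ 2 := by
      rw [← MeasureTheory.integral_const_mul]
      refine setIntegral_mono_on ?_ ?_ measurableSet_Ioc ?_
      · exact ((hvc.comp_continuous (by unfold circ ec; fun_prop) (circ_mem hr0 hr1)).norm.pow 2).integrableOn_Ioc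
      · exact ((f.differentiableOn_toFun.continuousOn.comp_continuous
          (by unfold circ ec; fun_prop) (circ_mem hr0 hr1)).norm.pow 2).integrableOn_Ioc.const_mul _
      · intro t _
        have h1 : ‖G (circ r t) * H2.toFun f (circ r t)‖ ≤ C * ‖H2.toFun f (circ r t)‖ := by
          rw [norm_mul]
          exact mul_le_mul_of_nonneg_right (hGb _ (circ_mem hr0 hr1 t)) (norm_nonneg _)
        calc ‖G (circ r t) * H2.toFun f (circ r t)‖ ^ 2
            ≤ (C * ‖H2.toFun f (circ r t)‖) ^ 2 := by
              have := norm_nonneg (G (circ r t) * H2.toFun f (circ r t))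
              nlinarith
          _ = C ^ 2 * ‖H2.toFun f (circ r t)‖ ^ 2 := by ring
    have hf_int : (∫ t in Set.Ioc (0:ℝ) 1, ‖H2.toFun f (circ r t)‖ ^ 2) ≤ ‖f‖ ^ 2 := by
      rw [← hPf.tsum_eq, ← f.tsum_sq]
      refine Summable.tsum_le_tsum ?_ hPf.summable f.summable_sq
      intro n
      calc ‖f n‖ ^ 2 * r ^ (2 * n) ≤ ‖f n‖ ^ 2 * 1 := by
            refine mul_le_mul_of_nonneg_left ?_ (by positivity)
            exact pow_le_one₀ hr0.le hr1.le
        _ = ‖f n‖ ^ 2 := mul_one _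
    calc ∑ n ∈ Finset.range N, ‖mulAux G f n‖ ^ 2 * r ^ (2 * n)
        ≤ ∫ t in Set.Ioc (0:ℝ) 1, ‖G (circ r t) * H2.toFun f (circ r t)‖ ^ 2 := by
          refine sum_le_hasSum _ (fun n _ => by positivity) hPv
      _ ≤ C ^ 2 * ∫ t in Set.Ioc (0:ℝ) 1, ‖H2.toFun f (circ r t)‖ ^ 2 := hle
      _ ≤ C ^ 2 * ‖f‖ ^ 2 := by
          refine mul_le_mul_of_nonneg_left hf_int (by positivity)
      _ = (C * ‖f‖) ^ 2 := by ring
  -- pass to the limit r → 1⁻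
  have htend : Filter.Tendsto
      (fun r : ℝ => ∑ n ∈ Finset.range N, ‖mulAux G f n‖ ^ 2 * r ^ (2 * n))
      (nhdsWithin 1 (Set.Iio 1)) (nhds (∑ n ∈ Finset.range N, ‖mulAux G f n‖ ^ 2)) := by
    have hcont : Continuous
        (fun r : ℝ => ∑ n ∈ Finset.range N, ‖mulAux G f n‖ ^ 2 * r ^ (2 * n)) := by
      refine continuous_finset_sum _ (fun n _ => ?_)
      exact continuous_const.mul (continuous_pow (2 * n))
    have h1 := (hcont.tendsto 1).mono_left (nhdsWithin_le_nhds (s := Set.Iio 1))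
    simpa using h1
  refine le_of_tendsto htend ?_
  filter_upwards [Ioo_mem_nhdsLT_of_mem (Set.mem_Ioc.mpr ⟨zero_lt_one, le_refl 1⟩)] with r hr
  exact key r hr.1 hr.2

include hGd hGb hC in
lemma mulAux_memℓp (f : H2) : Memℓp (mulAux G f) 2 := by
  apply memℓp_gen
  have hsum : Summable (fun n => ‖mulAux G f n‖ ^ 2) :=
    summable_of_sum_range_le (fun n => by positivity) (mulAux_bound hGd hC hGb f)
  have : (fun n => ‖mulAux G f n‖ ^ ((2:ENNReal).toReal)) = fun n => ‖mulAux G f n‖ ^ 2 := by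
    funext n
    rw [ENNReal.toReal_ofNat, show ((2:ℝ) = ((2:ℕ):ℝ)) by norm_num, Real.rpow_natCast]
  rwa [this]

include hGd hGb hC in
lemma mulAux_coeff_bound (f : H2) (n : ℕ) : ‖mulAux G f n‖ ≤ C * ‖f‖ := by
  have h := mulAux_bound hGd hC hGb f (n + 1)
  have h2 : ‖mulAux G f n‖ ^ 2 ≤ (C * ‖f‖) ^ 2 := by
    refine le_trans ?_ h
    exact Finset.single_le_sum (f := fun k => ‖mulAux G f k‖ ^ 2)
      (fun k _ => by positivity) (Finset.self_mem_range_succ n)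
  nlinarith [norm_nonneg (mulAux G f n), mul_nonneg hC (norm_nonneg f)]

end mulOp

lemma H2.toFun_add (f g : H2) {z : ℂ} (hz : ‖z‖ < 1) :
    (f + g).toFun z = f.toFun z + g.toFun z := by
  have h1 := (f.hasSum_toFun hz).add (g.hasSum_toFun hz)
  have h2 := (f + g).hasSum_toFun hz
  have he : (fun n => (f + g) n * z ^ n) = fun n => f n * z ^ n + g n * z ^ n := by
    funext n
    rw [lp.coeFn_add, Pi.add_apply]
    ring
  rw [he] at h2
  exact h2.unique h1

lemma H2.toFun_smul (a : ℂ) (f : H2) {z : ℂ} (hz : ‖z‖ < 1) :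
    (a • f).toFun z = a * f.toFun z := by
  have h1 := (f.hasSum_toFun hz).mul_left a
  have h2 := (a • f).hasSum_toFun hz
  have he : (fun n => (a • f) n * z ^ n) = fun n => a * (f n * z ^ n) := by
    funext n
    rw [lp.coeFn_smul, Pi.smul_apply, smul_eq_mul]
    ring
  rw [he] at h2
  exact h2.unique h1

section mulOp2
variable {G : ℂ → ℂ} (hGd : DifferentiableOn ℂ G (ball (0:ℂ) 1))
  {C : ℝ} (hC : 0 ≤ C) (hGb : ∀ z ∈ ball (0:ℂ) 1, ‖G z‖ ≤ C)

include hGd hC hGb in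
lemma mulAux_add (f g : H2) : mulAux G (f + g) = mulAux G f + mulAux G g := by
  refine coeff_unique (B := C * ‖f + g‖) (B' := C * ‖f‖ + C * ‖g‖)
    (mulAux_coeff_bound hGd hC hGb _)
    (fun n => by
      calc ‖(mulAux G f + mulAux G g) n‖ ≤ ‖mulAux G f n‖ + ‖mulAux G g n‖ := norm_add_le _ _
        _ ≤ C * ‖f‖ + C * ‖g‖ := add_le_add (mulAux_coeff_bound hGd hC hGb f n)
            (mulAux_coeff_bound hGd hC hGb g n))
    (g := fun z => G z * (f + g).toFun z)
    (mulAux_hasSum hGd (f + g)) ?_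
  intro z hz
  have hz' : ‖z‖ < 1 := by simpa [mem_ball, dist_eq_norm] using hz
  have h := (mulAux_hasSum hGd f z hz).add (mulAux_hasSum hGd g z hz)
  have he : (fun n => mulAux G f n * z ^ n + mulAux G g n * z ^ n)
      = fun n => (mulAux G f + mulAux G g) n * z ^ n := by
    funext n; rw [Pi.add_apply]; ring
  rw [he] at h
  show HasSum _ (G z * (f + g).toFun z)
  rw [H2.toFun_add f g hz', mul_add]
  exact h

include hGd hC hGb in
lemma mulAux_smul (a : ℂ) (f : H2) : mulAux G (a • f) = a • mulAux G f := by
  refine coeff_unique (B := C * ‖a • f‖) (B' := ‖a‖ * (C * ‖f‖))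
    (mulAux_coeff_bound hGd hC hGb _)
    (fun n => by
      rw [Pi.smul_apply, smul_eq_mul, norm_mul]
      exact mul_le_mul_of_nonneg_left (mulAux_coeff_bound hGd hC hGb f n) (norm_nonneg a))
    (g := fun z => G z * (a • f).toFun z)
    (mulAux_hasSum hGd (a • f)) ?_
  intro z hz
  have hz' : ‖z‖ < 1 := by simpa [mem_ball, dist_eq_norm] using hz
  have h := (mulAux_hasSum hGd f z hz).mul_left a
  have he : (fun n => a * (mulAux G f n * z ^ n)) = fun n => (a • mulAux G f) n * z ^ n := by
    funext n; rw [Pi.smul_apply, smul_eq_mul]; ring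
  rw [he] at h
  show HasSum _ (G z * (a • f).toFun z)
  rw [H2.toFun_smul a f hz', mul_left_comm]
  exact h

noncomputable def mulOp : H2 →L[ℂ] H2 :=
  LinearMap.mkContinuous
    { toFun := fun f => (⟨mulAux G f, mulAux_memℓp hGd hC hGb f⟩ : H2)
      map_add' := fun f g => Subtype.ext (by
        simp only [lp.coeFn_add]
        exact mulAux_add hGd hC hGb f g)
      map_smul' := fun a f => Subtype.ext (by
        simp only [lp.coeFn_smul, RingHom.id_apply]
        exact mulAux_smul hGd hC hGb a f) }
    C
    (by
      intro f
      simp only [LinearMap.coe_mk, AddHom.coe_mk]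
      have hsq : ‖(⟨mulAux G f, mulAux_memℓp hGd hC hGb f⟩ : H2)‖ ^ 2 ≤ (C * ‖f‖) ^ 2 := by
        rw [← H2.tsum_sq]
        refine tsum_le_of_sum_range_le (fun n => by positivity) ?_
        intro n
        exact mulAux_bound hGd hC hGb f n
      have h1 : (0:ℝ) ≤ ‖(⟨mulAux G f, mulAux_memℓp hGd hC hGb f⟩ : H2)‖ := norm_nonneg _
      have h2 : (0:ℝ) ≤ C * ‖f‖ := by positivity
      nlinarith)

lemma mulOp_apply (f : H2) (n : ℕ) : (mulOp hGd hC hGb f) n = mulAux G f n := rfl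

lemma mulOp_toFun (f : H2) {z : ℂ} (hz : z ∈ ball (0:ℂ) 1) :
    (mulOp hGd hC hGb f).toFun z = G z * f.toFun z := by
  have h := mulAux_hasSum hGd f z hz
  have : H2.toFun (mulOp hGd hC hGb f) z = ∑' n, mulAux G f n * z ^ n := rfl
  rw [this, h.tsum_eq]

end mulOp2

section symbolF
variable {s θ : ℝ} (hs : s ∈ Set.Ioo (0:ℝ) 1)

noncomputable def kk (s : ℝ) : ℝ := (1 + s) / (1 - s)
noncomputable def cc (s θ : ℝ) : ℝ := θ / Real.log (kk s)
noncomputable def FF (s θ : ℝ) (z : ℂ) : ℂ :=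
  Complex.exp ((cc s θ : ℂ) * Complex.I * Complex.log ((1 + z) / (1 - z)))
noncomputable def FFi (s θ : ℝ) (z : ℂ) : ℂ :=
  Complex.exp (-((cc s θ : ℂ) * Complex.I) * Complex.log ((1 + z) / (1 - z)))

include hs
lemma kk_pos : 0 < kk s := by
  obtain ⟨h0, h1⟩ := hs
  exact div_pos (by linarith) (by linarith)

lemma kk_gt_one : 1 < kk s := by
  obtain ⟨h0, h1⟩ := hs
  rw [kk, lt_div_iff₀ (by linarith)]
  linarith
omit hs

lemma one_sub_ne {z : ℂ} (hz : ‖z‖ < 1) : (1 : ℂ) - z ≠ 0 := by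
  intro h
  have : z = 1 := by linear_combination -h
  rw [this] at hz
  simp at hz

lemma w_re_pos {z : ℂ} (hz : ‖z‖ < 1) : 0 < (((1 : ℂ) + z) / (1 - z)).re := by
  have hn : Complex.normSq z < 1 := by
    have : Complex.normSq z = ‖z‖ ^ 2 := by
      rw [Complex.normSq_eq_norm_sq]
    rw [this]
    nlinarith [norm_nonneg z]
  have hd : 0 < Complex.normSq (1 - z) := by
    rw [Complex.normSq_pos]
    exact one_sub_ne hz
  rw [Complex.div_re]
  have h1 : (1 + z).re * (1 - z).re / Complex.normSq (1 - z)
      + (1 + z).im * (1 - z).im / Complex.normSq (1 - z)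
      = (1 - Complex.normSq z) / Complex.normSq (1 - z) := by
    rw [← add_div]
    congr 1
    simp [Complex.add_re, Complex.add_im, Complex.sub_re, Complex.sub_im, Complex.normSq_apply]
    ring
  rw [h1]
  exact div_pos (by linarith) hd

lemma w_ne {z : ℂ} (hz : ‖z‖ < 1) : ((1 : ℂ) + z) / (1 - z) ≠ 0 := by
  intro h
  have := w_re_pos hz
  rw [h] at this
  simp at this

lemma w_slit {z : ℂ} (hz : ‖z‖ < 1) : ((1 : ℂ) + z) / (1 - z) ∈ Complex.slitPlane :=
  Or.inl (w_re_pos hz)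

lemma FF_bound {z : ℂ} (hz : ‖z‖ < 1) : ‖FF s θ z‖ ≤ Real.exp (|cc s θ| * (π / 2)) := by
  rw [FF, Complex.norm_exp]
  apply Real.exp_le_exp.mpr
  have hre : ((cc s θ : ℂ) * Complex.I * Complex.log ((1 + z) / (1 - z))).re
      = -(cc s θ * Complex.arg ((1 + z) / (1 - z))) := by
    rw [Complex.mul_re]
    simp [Complex.mul_re, Complex.mul_im, Complex.log_im]
  rw [hre]
  have harg : |Complex.arg ((1 + z) / (1 - z))| ≤ π / 2 :=
    Complex.abs_arg_le_pi_div_two_iff.mpr (w_re_pos hz).le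
  calc -(cc s θ * Complex.arg ((1 + z) / (1 - z)))
      ≤ |cc s θ * Complex.arg ((1 + z) / (1 - z))| := neg_le_abs _
    _ = |cc s θ| * |Complex.arg ((1 + z) / (1 - z))| := abs_mul _ _
    _ ≤ |cc s θ| * (π / 2) := mul_le_mul_of_nonneg_left harg (abs_nonneg _)

lemma FFi_bound {z : ℂ} (hz : ‖z‖ < 1) : ‖FFi s θ z‖ ≤ Real.exp (|cc s θ| * (π / 2)) := by
  rw [FFi, Complex.norm_exp]
  apply Real.exp_le_exp.mpr
  have hre : (-((cc s θ : ℂ) * Complex.I) * Complex.log ((1 + z) / (1 - z))).re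
      = cc s θ * Complex.arg ((1 + z) / (1 - z)) := by
    rw [Complex.mul_re]
    simp [Complex.mul_re, Complex.mul_im, Complex.log_im]
  rw [hre]
  have harg : |Complex.arg ((1 + z) / (1 - z))| ≤ π / 2 :=
    Complex.abs_arg_le_pi_div_two_iff.mpr (w_re_pos hz).le
  calc cc s θ * Complex.arg ((1 + z) / (1 - z))
      ≤ |cc s θ * Complex.arg ((1 + z) / (1 - z))| := le_abs_self _
    _ = |cc s θ| * |Complex.arg ((1 + z) / (1 - z))| := abs_mul _ _
    _ ≤ |cc s θ| * (π / 2) := mul_le_mul_of_nonneg_left harg (abs_nonneg _)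

lemma FF_mul_FFi {z : ℂ} : FF s θ z * FFi s θ z = 1 := by
  rw [FF, FFi, ← Complex.exp_add]
  rw [show ((cc s θ : ℂ) * Complex.I * Complex.log ((1 + z) / (1 - z))
      + -((cc s θ : ℂ) * Complex.I) * Complex.log ((1 + z) / (1 - z))) = 0 by ring]
  exact Complex.exp_zero

lemma FF_diff : DifferentiableOn ℂ (FF s θ) (ball (0:ℂ) 1) := by
  intro z hz
  have hz' : ‖z‖ < 1 := by simpa [mem_ball, dist_eq_norm] using hz
  apply DifferentiableAt.differentiableWithinAt
  apply DifferentiableAt.cexp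
  apply DifferentiableAt.const_mul
  exact (Complex.differentiableAt_log (w_slit hz')).comp z
    (DifferentiableAt.div (by fun_prop) (by fun_prop) (one_sub_ne hz'))

lemma FFi_diff : DifferentiableOn ℂ (FFi s θ) (ball (0:ℂ) 1) := by
  intro z hz
  have hz' : ‖z‖ < 1 := by simpa [mem_ball, dist_eq_norm] using hz
  apply DifferentiableAt.differentiableWithinAt
  apply DifferentiableAt.cexp
  apply DifferentiableAt.const_mul
  exact (Complex.differentiableAt_log (w_slit hz')).comp z
    (DifferentiableAt.div (by fun_prop) (by fun_prop) (one_sub_ne hz'))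

include hs in
lemma phi_mem {z : ℂ} (hz : ‖z‖ < 1) : ‖(z + (s:ℂ)) / (1 + (s:ℂ) * z)‖ < 1 := by
  obtain ⟨h0, h1⟩ := hs
  have hd : ((1:ℂ) + (s:ℂ) * z) ≠ 0 := by
    intro h
    have h2 : (s:ℂ) * z = -1 := by linear_combination h
    have h3 : ‖(s:ℂ) * z‖ = 1 := by rw [h2]; simp
    rw [norm_mul, Complex.norm_real, Real.norm_of_nonneg h0.le] at h3
    nlinarith [norm_nonneg z]
  rw [norm_div, div_lt_one (norm_pos_iff.mpr hd)]
  have hsq : Complex.normSq (z + (s:ℂ)) < Complex.normSq (1 + (s:ℂ) * z) := by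
    simp only [Complex.normSq_apply, Complex.add_re, Complex.add_im, Complex.mul_re,
      Complex.mul_im, Complex.ofReal_re, Complex.ofReal_im, Complex.one_re, Complex.one_im]
    have hn : z.re ^ 2 + z.im ^ 2 < 1 := by
      have : Complex.normSq z = ‖z‖ ^ 2 := by rw [Complex.normSq_eq_norm_sq]
      have h4 : Complex.normSq z < 1 := by rw [this]; nlinarith [norm_nonneg z]
      rw [Complex.normSq_apply] at h4
      nlinarith
    nlinarith [mul_pos (by nlinarith : (0:ℝ) < 1 - s^2)
      (by nlinarith : (0:ℝ) < 1 - z.re^2 - z.im^2)]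
  have e1 : ‖z + (s:ℂ)‖ ^ 2 = Complex.normSq (z + (s:ℂ)) := by
    rw [Complex.normSq_eq_norm_sq]
  have e2 : ‖(1:ℂ) + (s:ℂ) * z‖ ^ 2 = Complex.normSq (1 + (s:ℂ) * z) := by
    rw [Complex.normSq_eq_norm_sq]
  nlinarith [norm_nonneg (z + (s:ℂ)), norm_nonneg ((1:ℂ) + (s:ℂ) * z)]

include hs in
lemma FF_funeq {z : ℂ} (hz : ‖z‖ < 1) :
    FF s θ ((z + (s:ℂ)) / (1 + (s:ℂ) * z)) = Complex.exp ((θ:ℂ) * Complex.I) * FF s θ z := by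
  have h0 := hs.1
  have h1 := hs.2
  have hd : ((1:ℂ) + (s:ℂ) * z) ≠ 0 := by
    intro h
    have h2 : (s:ℂ) * z = -1 := by linear_combination h
    have h3 : ‖(s:ℂ) * z‖ = 1 := by rw [h2]; simp
    rw [norm_mul, Complex.norm_real, Real.norm_of_nonneg h0.le] at h3
    nlinarith [norm_nonneg z]
  have h1z : (1:ℂ) - z ≠ 0 := one_sub_ne hz
  have hne2 : (1:ℂ) - (s:ℂ) ≠ 0 := by
    rw [show (1:ℂ) - (s:ℂ) = ((1 - s : ℝ) : ℂ) by push_cast; ring]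
    exact Complex.ofReal_ne_zero.mpr (by linarith)
  have hnum : (1:ℂ) + (z + (s:ℂ)) / (1 + (s:ℂ) * z)
      = ((1 + (s:ℂ)) * (1 + z)) / (1 + (s:ℂ) * z) := by
    rw [eq_div_iff hd, add_mul, div_mul_cancel₀ _ hd]
    ring
  have hden : (1:ℂ) - (z + (s:ℂ)) / (1 + (s:ℂ) * z)
      = ((1 - (s:ℂ)) * (1 - z)) / (1 + (s:ℂ) * z) := by
    rw [eq_div_iff hd, sub_mul, div_mul_cancel₀ _ hd]
    ring
  have hdne : (1:ℂ) - (z + (s:ℂ)) / (1 + (s:ℂ) * z) ≠ 0 := by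
    rw [hden]
    exact div_ne_zero (mul_ne_zero hne2 h1z) hd
  have h3 : ((1:ℂ) + (z + (s:ℂ)) / (1 + (s:ℂ) * z)) / (1 - (z + (s:ℂ)) / (1 + (s:ℂ) * z))
      = ((kk s : ℝ) : ℂ) * ((1 + z) / (1 - z)) := by
    rw [hnum, hden, kk]
    push_cast
    field_simp
  have h4 : Complex.log (((1:ℂ) + (z + (s:ℂ)) / (1 + (s:ℂ) * z))
        / (1 - (z + (s:ℂ)) / (1 + (s:ℂ) * z)))
      = (Real.log (kk s) : ℂ) + Complex.log ((1 + z) / (1 - z)) := by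
    rw [h3, Complex.log_ofReal_mul (kk_pos hs) (w_ne hz)]
  rw [FF, h4, FF]
  rw [show (cc s θ : ℂ) * Complex.I * ((Real.log (kk s) : ℂ) + Complex.log ((1 + z) / (1 - z)))
      = (cc s θ : ℂ) * Complex.I * (Real.log (kk s) : ℂ)
        + (cc s θ : ℂ) * Complex.I * Complex.log ((1 + z) / (1 - z)) by ring]
  rw [Complex.exp_add]
  congr 2
  rw [show (cc s θ : ℂ) * Complex.I * (Real.log (kk s) : ℂ)
      = ((cc s θ * Real.log (kk s) : ℝ) : ℂ) * Complex.I by push_cast; ring]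
  congr 2
  norm_cast
  rw [cc, div_mul_cancel₀]
  exact ne_of_gt (Real.log_pos (kk_gt_one hs))

end symbolF

end prelim

/-- Let `φ(z) = (z+s)/(1+sz)` with `s ∈ (0,1)` and let `ψ` be holomorphic on `𝔻`, continuous
on the closed disc and bounded away from zero. Then the spectrum of the weighted composition
operator `C_{ψ,φ}` on `H²(𝔻)` is invariant under rotations: if `λ` is in the spectrum then so
is `e^{iθ}λ` for every `θ ∈ ℝ`. -/
theorem stmt16 (s : ℝ) (hs : s ∈ Set.Ioo (0 : ℝ) 1)
    (φ : ℂ → ℂ) (hφ : ∀ z : ℂ, φ z = (z + s) / (1 + s * z))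
    (ψ : ℂ → ℂ)
    (hψc : ContinuousOn ψ (closedBall 0 1))
    (hψ : DifferentiableOn ℂ ψ (ball 0 1))
    (hψ0 : ∃ ε > (0 : ℝ), ∀ z ∈ ball (0 : ℂ) 1, ε ≤ ‖ψ z‖)
    (T : H2 →L[ℂ] H2)
    (hT : ∀ f : H2, ∀ z ∈ ball (0 : ℂ) 1, (T f).toFun z = ψ z * f.toFun (φ z)) :
    ∀ θ : ℝ, ∀ lam ∈ spectrum ℂ T, Complex.exp (θ * Complex.I) * lam ∈ spectrum ℂ T := by
  intro θ lam hlam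
  have hC : (0:ℝ) ≤ Real.exp (|cc s θ| * (π / 2)) := (Real.exp_pos _).le
  have hFb : ∀ z ∈ ball (0:ℂ) 1, ‖FF s θ z‖ ≤ Real.exp (|cc s θ| * (π / 2)) :=
    fun z hz => FF_bound (by simpa [mem_ball, dist_eq_norm] using hz)
  have hFib : ∀ z ∈ ball (0:ℂ) 1, ‖FFi s θ z‖ ≤ Real.exp (|cc s θ| * (π / 2)) :=
    fun z hz => FFi_bound (by simpa [mem_ball, dist_eq_norm] using hz)
  set M : H2 →L[ℂ] H2 := mulOp (FF_diff (s := s) (θ := θ)) hC hFb with hM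
  set Mi : H2 →L[ℂ] H2 := mulOp (FFi_diff (s := s) (θ := θ)) hC hFib with hMi
  set μ : ℂ := Complex.exp ((θ:ℂ) * Complex.I) with hμdef
  have hMMi : M * Mi = 1 := by
    refine ContinuousLinearMap.ext fun f => H2.ext_toFun fun z hz => ?_
    rw [ContinuousLinearMap.mul_apply, ContinuousLinearMap.one_apply, hM, hMi,
      mulOp_toFun _ _ _ _ hz, mulOp_toFun _ _ _ _ hz, ← mul_assoc, FF_mul_FFi, one_mul]
  have hMiM : Mi * M = 1 := by
    refine ContinuousLinearMap.ext fun f => H2.ext_toFun fun z hz => ?_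
    rw [ContinuousLinearMap.mul_apply, ContinuousLinearMap.one_apply, hM, hMi,
      mulOp_toFun _ _ _ _ hz, mulOp_toFun _ _ _ _ hz, ← mul_assoc,
      mul_comm (FFi s θ z) (FF s θ z), FF_mul_FFi, one_mul]
  set u : (H2 →L[ℂ] H2)ˣ := ⟨M, Mi, hMMi, hMiM⟩ with hu
  have hTM : T * (u : H2 →L[ℂ] H2) = μ • ((u : H2 →L[ℂ] H2) * T) := by
    refine ContinuousLinearMap.ext fun f => H2.ext_toFun fun z hz => ?_
    have hz' : ‖z‖ < 1 := by simpa [mem_ball, dist_eq_norm] using hz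
    have hφz : φ z ∈ ball (0:ℂ) 1 := by
      rw [hφ z]
      simpa [mem_ball, dist_eq_norm] using phi_mem hs hz'
    have hL : ((T * (u : H2 →L[ℂ] H2)) f).toFun z = ψ z * (μ * FF s θ z * f.toFun (φ z)) := by
      rw [ContinuousLinearMap.mul_apply]
      show (T (M f)).toFun z = _
      rw [hT (M f) z hz, hM, mulOp_toFun _ _ _ _ hφz]
      congr 1
      rw [show FF s θ (φ z) = μ * FF s θ z by
        rw [hφ z, hμdef]; exact FF_funeq hs hz']
    have hR : ((μ • ((u : H2 →L[ℂ] H2) * T)) f).toFun z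
        = μ * (FF s θ z * (ψ z * f.toFun (φ z))) := by
      rw [ContinuousLinearMap.smul_apply, ContinuousLinearMap.mul_apply]
      show (μ • (M (T f))).toFun z = _
      rw [H2.toFun_smul μ _ hz', hM, mulOp_toFun _ _ _ _ hz, hT f z hz]
    rw [hL, hR]
    ring
  have hconj : ((u⁻¹ : (H2 →L[ℂ] H2)ˣ) : H2 →L[ℂ] H2) * T * (u : H2 →L[ℂ] H2) = μ • T := by
    calc ((u⁻¹ : (H2 →L[ℂ] H2)ˣ) : H2 →L[ℂ] H2) * T * (u : H2 →L[ℂ] H2)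
        = ((u⁻¹ : (H2 →L[ℂ] H2)ˣ) : H2 →L[ℂ] H2) * (T * (u : H2 →L[ℂ] H2)) := by
          rw [mul_assoc]
      _ = ((u⁻¹ : (H2 →L[ℂ] H2)ˣ) : H2 →L[ℂ] H2) * (μ • ((u : H2 →L[ℂ] H2) * T)) := by
          rw [hTM]
      _ = μ • (((u⁻¹ : (H2 →L[ℂ] H2)ˣ) : H2 →L[ℂ] H2) * ((u : H2 →L[ℂ] H2) * T)) :=
          mul_smul_comm μ _ _
      _ = μ • T := by rw [← mul_assoc, u.inv_mul, one_mul]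
  have hspec : spectrum ℂ (μ • T) = spectrum ℂ T := by
    rw [← hconj]
    exact spectrum.units_conjugate'
  have hμne : μ ≠ 0 := Complex.exp_ne_zero _
  have hsmul := spectrum.unit_smul_eq_smul T (Units.mk0 μ hμne)
  have hUsmul : (Units.mk0 μ hμne) • T = μ • T := rfl
  rw [hUsmul, hspec] at hsmul
  -- hsmul : spectrum ℂ T = Units.mk0 μ hμne • spectrum ℂ T
  rw [hsmul]
  refine ⟨lam, hlam, ?_⟩
  simp [Units.smul_def, smul_eq_mul]
end
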